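/- Let all parameters of the rabies model be nonnegative with C > 0, and let the constant controls satisfy u1,u2,u3,u4 ∈ [0,1], u1+u3 ≤ 1, u1+u2 ≤ 1. If (S_H,E_H,I_H,R_H,S_F,E_F,I_F,S_D,E_D,I_D,R_D,M) : ℝ → ℝ¹² is differentiable on [0,∞) and satisfies the rabies model system for all t ≥ 0, and all twelve components are nonnegative at t = 0, then all twelve components remain nonnegative for all t ≥ 0. -/

import Mathlib

private lemma min_sq_deriv (x : ℝ) : HasDerivAt (fun y : ℝ => min y 0 ^ 2) (2 * min x 0) x := by
  rcases lt_trichotomy x 0 with h | h | h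
  · have hev : (fun y : ℝ => min y 0 ^ 2) =ᶠ[nhds x] (fun y : ℝ => y ^ 2) := by
      filter_upwards [Iio_mem_nhds h] with y hy
      rw [min_eq_left (le_of_lt hy)]
    have h2 : HasDerivAt (fun y : ℝ => y ^ 2) (2 * x) x := by
      simpa using hasDerivAt_pow 2 x
    rw [min_eq_left h.le]
    exact h2.congr_of_eventuallyEq hev
  · subst h
    have h0 : (2 : ℝ) * min 0 0 = 0 := by simp
    rw [h0, hasDerivAt_iff_isLittleO]
    have heq : (fun y : ℝ => min y 0 ^ 2 - min (0:ℝ) 0 ^ 2 - (y - 0) • (0:ℝ)) =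
        fun y : ℝ => min y 0 ^ 2 := by
      funext y; simp
    rw [heq, Asymptotics.isLittleO_iff]
    intro c hc
    filter_upwards [Metric.ball_mem_nhds (0:ℝ) hc] with y hy
    rw [Metric.mem_ball, Real.dist_eq, sub_zero] at hy
    have h1 : |min y 0| ≤ |y| := by
      rcases le_total y 0 with h' | h'
      · rw [min_eq_left h']
      · rw [min_eq_right h']; simp [abs_nonneg]
    have e1 : |min y 0 ^ 2| = |min y 0| ^ 2 := abs_pow _ _
    rw [Real.norm_eq_abs, Real.norm_eq_abs, sub_zero, e1]
    nlinarith [abs_nonneg (min y 0), abs_nonneg y]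
  · have hev : (fun y : ℝ => min y 0 ^ 2) =ᶠ[nhds x] (fun _ : ℝ => (0:ℝ)) := by
      filter_upwards [Ioi_mem_nhds h] with y hy
      rw [min_eq_right hy.le]; norm_num
    rw [min_eq_right h.le, mul_zero]
    exact (hasDerivAt_const x 0).congr_of_eventuallyEq hev

private lemma min_mul_self (x : ℝ) : min x 0 * x = min x 0 ^ 2 := by
  rcases le_total x 0 with h | h
  · rw [min_eq_left h]; ring
  · rw [min_eq_right h]; ring

private lemma prodQ (a b Q : ℝ) (ha : a ^ 2 ≤ Q) (hb : b ^ 2 ≤ Q) : a * b ≤ Q := by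
  linarith [sq_nonneg (a - b)]

private lemma mixQ (m x Q : ℝ) (hm : m ≤ 0) (hm2 : m ^ 2 ≤ Q) (hx2 : min x 0 ^ 2 ≤ Q) :
    m * x ≤ Q :=
  le_trans (mul_le_mul_of_nonpos_left (min_le_left x 0) hm) (prodQ m (min x 0) Q hm2 hx2)

private lemma mul_np (a b : ℝ) (ha : a ≤ 0) (hb : 0 ≤ b) : a * b ≤ 0 := by nlinarith

private lemma e_mul_le (e x U : ℝ) (he0 : 0 ≤ e) (he1 : e ≤ 1) (hx : x ≤ U) (hU : 0 ≤ U) :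
    e * x ≤ U := by
  rcases le_total x 0 with h | h
  · nlinarith
  · nlinarith

private lemma e_mul_ge (e x W : ℝ) (he0 : 0 ≤ e) (he1 : e ≤ 1) (hx : W ≤ x) (hW : W ≤ 0) :
    W ≤ e * x := by
  rcases le_total x 0 with h | h
  · nlinarith
  · nlinarith

private lemma lower_cS (c S U W B : ℝ) (hcU : c ≤ U) (hWc : W ≤ c) (hW : W ≤ 0)
    (hSB : S ≤ B) (hB : 0 ≤ B) : U * min S 0 + B * W ≤ c * S := by
  rcases le_total S 0 with h | h
  · rw [min_eq_left h]
    nlinarith [mul_nonneg (sub_nonneg.2 hcU) (neg_nonneg.2 h), mul_nonneg hB (neg_nonneg.2 hW)]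
  · rw [min_eq_right h]
    nlinarith [mul_nonneg (sub_nonneg.2 hWc) h, mul_nonneg (sub_nonneg.2 hSB) (neg_nonneg.2 hW)]

private lemma div_ub (a b r : ℝ) (hr : 0 ≤ r) (hab : a ≤ b) (hb : 0 ≤ b) : a / (1 + r) ≤ b := by
  rw [div_le_iff₀ (by linarith : (0:ℝ) < 1 + r)]
  nlinarith [mul_nonneg hb hr]

private lemma div_lb (w a r : ℝ) (hr : 0 ≤ r) (hwa : w ≤ a) (hw : w ≤ 0) : w ≤ a / (1 + r) := by
  rw [le_div_iff₀ (by linarith : (0:ℝ) < 1 + r)]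
  nlinarith [mul_nonneg (neg_nonneg.2 hw) hr]

private lemma nonneg_of_sq_le (x : ℝ) (h : min x 0 ^ 2 ≤ 0) : 0 ≤ x := by
  rcases le_total 0 x with h' | h'
  · exact h'
  · rw [min_eq_left h'] at h; nlinarith

private lemma nonneg_at_lim (X : ℝ → ℝ) (a : ℝ) (ha : 0 < a) (hc : ContinuousAt X a)
    (h : ∀ s, 0 ≤ s → s < a → 0 ≤ X s) : 0 ≤ X a := by
  have h1 : Filter.Tendsto X (nhdsWithin a (Set.Iio a)) (nhds (X a)) :=
    hc.continuousWithinAt.tendsto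
  refine ge_of_tendsto h1 ?_
  filter_upwards [Ioo_mem_nhdsLT_of_mem (Set.mem_Ioc.mpr ⟨ha, le_refl a⟩)] with s hs
  exact h s hs.1.le hs.2

private lemma lam_bounds (m B C c2 : ℝ) (hC : 0 < C) (hc2 : c2 = (C/2)⁻¹) (hm : |m| ≤ B)
    (hmc : C/2 ≤ m + C) :
    m/(m+C) ≤ B*c2 ∧ -(B*c2) ≤ m/(m+C) ∧ c2 * min m 0 ≤ m/(m+C) := by
  have h0 : 0 < m + C := lt_of_lt_of_le (by linarith) hmc
  have hB0 : 0 ≤ B := le_trans (abs_nonneg m) hm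
  have habs : |m/(m+C)| ≤ B * c2 := by
    rw [abs_div, abs_of_pos h0]
    calc |m| / (m + C) ≤ B / (C/2) := div_le_div₀ hB0 hm (by linarith) hmc
      _ = B * c2 := by rw [hc2, div_eq_mul_inv]
  refine ⟨(abs_le.1 habs).2, (abs_le.1 habs).1, ?_⟩
  rcases le_or_gt 0 m with h | h
  · rw [min_eq_right h]
    rw [mul_zero]
    exact div_nonneg h h0.le
  · rw [min_eq_left h.le]
    have hinv : (m + C)⁻¹ ≤ (C/2)⁻¹ := by
      apply inv_anti₀ (by linarith) hmc
    have := mul_le_mul_of_nonpos_left hinv h.le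
    rw [div_eq_mul_inv, hc2]
    linarith


private lemma np_mul' (a b : ℝ) (ha : 0 ≤ a) (hb : b ≤ 0) : a * b ≤ 0 := by nlinarith

set_option maxHeartbeats 4000000 in
private lemma rabies_core
    (th1 th2 th3 mu1 mu2 mu3 mu4 tau1 tau2 tau3 ka1 ka2 ka3 ps1 ps2 ps3 rh1 rh2 rh3 be1 be2 be3 ga ga1 ga2 ga3 si1 si2 si3 nu1 nu2 nu3 u1 u2 u3 u4 : ℝ)
    (B c2 K : ℝ)
    (sh eh ihv rhv sf ef ifv sd ed idv rdv mv lam : ℝ)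
    (hpth1 : 0 ≤ th1) (hpth2 : 0 ≤ th2) (hpth3 : 0 ≤ th3)
    (hpmu1 : 0 ≤ mu1) (hpmu2 : 0 ≤ mu2) (hpmu3 : 0 ≤ mu3) (hpmu4 : 0 ≤ mu4)
    (hptau1 : 0 ≤ tau1) (hptau2 : 0 ≤ tau2) (hptau3 : 0 ≤ tau3)
    (hpka1 : 0 ≤ ka1) (hpka2 : 0 ≤ ka2) (hpka3 : 0 ≤ ka3)
    (hpps1 : 0 ≤ ps1) (hpps2 : 0 ≤ ps2) (hpps3 : 0 ≤ ps3)
    (hprh1 : 0 ≤ rh1) (hprh2 : 0 ≤ rh2) (hprh3 : 0 ≤ rh3)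
    (hpbe1 : 0 ≤ be1) (hpbe2 : 0 ≤ be2) (hpbe3 : 0 ≤ be3)
    (hpga : 0 ≤ ga) (hpga1 : 0 ≤ ga1) (hpga2 : 0 ≤ ga2) (hpga3 : 0 ≤ ga3)
    (hpsi1 : 0 ≤ si1) (hpsi2 : 0 ≤ si2) (hpsi3 : 0 ≤ si3)
    (hpnu1 : 0 ≤ nu1) (hpnu2 : 0 ≤ nu2) (hpnu3 : 0 ≤ nu3)
    (hu40 : 0 ≤ u4) (hu41 : u4 ≤ 1)
    (he3a : 0 ≤ 1 - (u1 + u3)) (he3b : 1 - (u1 + u3) ≤ 1)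
    (he2a : 0 ≤ 1 - (u1 + u2)) (he2b : 1 - (u1 + u2) ≤ 1)
    (hB0 : 0 ≤ B) (hc20 : 0 ≤ c2)
    (hb1 : |sh| ≤ B) (hb2 : |eh| ≤ B) (hb3 : |ihv| ≤ B) (hb4 : |rhv| ≤ B)
    (hb5 : |sf| ≤ B) (hb6 : |ef| ≤ B) (hb7 : |ifv| ≤ B) (hb8 : |sd| ≤ B)
    (hb9 : |ed| ≤ B) (hb10 : |idv| ≤ B) (hb11 : |rdv| ≤ B) (hb12 : |mv| ≤ B)
    (hlam1 : lam ≤ B * c2) (hlam2 : -(B * c2) ≤ lam) (hlam3 : c2 * min mv 0 ≤ lam)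
    (hK : 2 * ((be3 + (tau1*B + tau2*B + tau3*(B*c2)))
        + ((tau1*B + tau2*B + tau3*(B*c2)) + B*tau1 + B*tau2 + B*(tau3*c2))
        + be1 + (be2 + 1)
        + (ka1*B + ka2*B + ka3*(B*c2))
        + ((ka1*B + ka2*B + ka3*(B*c2)) + B*ka1 + B*ka2 + B*(ka3*c2))
        + ga + ((ps1*B + ps2*B + ps3*(B*c2)) + ga3)
        + ((ps1*B + ps2*B + ps3*(B*c2)) + B*ps1 + B*ps2 + B*(ps3*c2))
        + ga1 + (ga2 + 1) + (nu1 + nu2 + nu3)) ≤ K) :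
    2 * min sh 0 * (th1 + be3 * rhv - mu1 * sh - (1 - (u1 + u3)) * (tau1 * ifv + tau2 * idv + tau3 * lam) * sh)
    + 2 * min eh 0 * ((1 - (u1 + u3)) * (tau1 * ifv + tau2 * idv + tau3 * lam) * sh - (mu1 + be1 + be2 + u4) * eh)
    + 2 * min ihv 0 * (be1 * eh - (si1 + mu1) * ihv)
    + 2 * min rhv 0 * ((be2 + u4) * eh - (be3 + mu1) * rhv)
    + 2 * min sf 0 * (th2 - (ka1 * ifv + ka2 * idv + ka3 * lam) * sf - mu2 * sf)
    + 2 * min ef 0 * ((ka1 * ifv + ka2 * idv + ka3 * lam) * sf - (mu2 + ga) * ef)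
    + 2 * min ifv 0 * (ga * ef - (mu2 + si2) * ifv)
    + 2 * min sd 0 * (th3 - mu3 * sd - (1 - (u1 + u2)) * (ps1 * ifv / (1 + rh1) + ps2 * idv / (1 + rh2) + ps3 * lam / (1 + rh3)) * sd + ga3 * rdv)
    + 2 * min ed 0 * ((1 - (u1 + u2)) * (ps1 * ifv / (1 + rh1) + ps2 * idv / (1 + rh2) + ps3 * lam / (1 + rh3)) * sd - (mu3 + ga1 + ga2 + u4) * ed)
    + 2 * min idv 0 * (ga1 * ed - (mu3 + si3) * idv)
    + 2 * min rdv 0 * ((ga2 + u4) * ed - (mu3 + ga3) * rdv)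
    + 2 * min mv 0 * (nu1 * ihv + nu2 * ifv + nu3 * idv - mu4 * mv)
    ≤ K * (min sh 0 ^ 2 + min eh 0 ^ 2 + min ihv 0 ^ 2 + min rhv 0 ^ 2 + min sf 0 ^ 2
        + min ef 0 ^ 2 + min ifv 0 ^ 2 + min sd 0 ^ 2 + min ed 0 ^ 2 + min idv 0 ^ 2
        + min rdv 0 ^ 2 + min mv 0 ^ 2) := by
  have q1 : (min sh 0) ≤ 0 := min_le_right _ _
  have q2 : (min eh 0) ≤ 0 := min_le_right _ _
  have q3 : (min ihv 0) ≤ 0 := min_le_right _ _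
  have q4 : (min rhv 0) ≤ 0 := min_le_right _ _
  have q5 : (min sf 0) ≤ 0 := min_le_right _ _
  have q6 : (min ef 0) ≤ 0 := min_le_right _ _
  have q7 : (min ifv 0) ≤ 0 := min_le_right _ _
  have q8 : (min sd 0) ≤ 0 := min_le_right _ _
  have q9 : (min ed 0) ≤ 0 := min_le_right _ _
  have q10 : (min idv 0) ≤ 0 := min_le_right _ _
  have q11 : (min rdv 0) ≤ 0 := min_le_right _ _
  have q12 : (min mv 0) ≤ 0 := min_le_right _ _
  have hQ0 : 0 ≤ (min sh 0 ^ 2 + min eh 0 ^ 2 + min ihv 0 ^ 2 + min rhv 0 ^ 2 + min sf 0 ^ 2 + min ef 0 ^ 2 + min ifv 0 ^ 2 + min sd 0 ^ 2 + min ed 0 ^ 2 + min idv 0 ^ 2 + min rdv 0 ^ 2 + min mv 0 ^ 2) := by positivity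
  have e1 : (min sh 0) ^ 2 ≤ (min sh 0 ^ 2 + min eh 0 ^ 2 + min ihv 0 ^ 2 + min rhv 0 ^ 2 + min sf 0 ^ 2 + min ef 0 ^ 2 + min ifv 0 ^ 2 + min sd 0 ^ 2 + min ed 0 ^ 2 + min idv 0 ^ 2 + min rdv 0 ^ 2 + min mv 0 ^ 2) := by linarith only [sq_nonneg (min eh 0), sq_nonneg (min ihv 0), sq_nonneg (min rhv 0), sq_nonneg (min sf 0), sq_nonneg (min ef 0), sq_nonneg (min ifv 0), sq_nonneg (min sd 0), sq_nonneg (min ed 0), sq_nonneg (min idv 0), sq_nonneg (min rdv 0), sq_nonneg (min mv 0)]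
  have e2 : (min eh 0) ^ 2 ≤ (min sh 0 ^ 2 + min eh 0 ^ 2 + min ihv 0 ^ 2 + min rhv 0 ^ 2 + min sf 0 ^ 2 + min ef 0 ^ 2 + min ifv 0 ^ 2 + min sd 0 ^ 2 + min ed 0 ^ 2 + min idv 0 ^ 2 + min rdv 0 ^ 2 + min mv 0 ^ 2) := by linarith only [sq_nonneg (min sh 0), sq_nonneg (min ihv 0), sq_nonneg (min rhv 0), sq_nonneg (min sf 0), sq_nonneg (min ef 0), sq_nonneg (min ifv 0), sq_nonneg (min sd 0), sq_nonneg (min ed 0), sq_nonneg (min idv 0), sq_nonneg (min rdv 0), sq_nonneg (min mv 0)]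
  have e3 : (min ihv 0) ^ 2 ≤ (min sh 0 ^ 2 + min eh 0 ^ 2 + min ihv 0 ^ 2 + min rhv 0 ^ 2 + min sf 0 ^ 2 + min ef 0 ^ 2 + min ifv 0 ^ 2 + min sd 0 ^ 2 + min ed 0 ^ 2 + min idv 0 ^ 2 + min rdv 0 ^ 2 + min mv 0 ^ 2) := by linarith only [sq_nonneg (min sh 0), sq_nonneg (min eh 0), sq_nonneg (min rhv 0), sq_nonneg (min sf 0), sq_nonneg (min ef 0), sq_nonneg (min ifv 0), sq_nonneg (min sd 0), sq_nonneg (min ed 0), sq_nonneg (min idv 0), sq_nonneg (min rdv 0), sq_nonneg (min mv 0)]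
  have e4 : (min rhv 0) ^ 2 ≤ (min sh 0 ^ 2 + min eh 0 ^ 2 + min ihv 0 ^ 2 + min rhv 0 ^ 2 + min sf 0 ^ 2 + min ef 0 ^ 2 + min ifv 0 ^ 2 + min sd 0 ^ 2 + min ed 0 ^ 2 + min idv 0 ^ 2 + min rdv 0 ^ 2 + min mv 0 ^ 2) := by linarith only [sq_nonneg (min sh 0), sq_nonneg (min eh 0), sq_nonneg (min ihv 0), sq_nonneg (min sf 0), sq_nonneg (min ef 0), sq_nonneg (min ifv 0), sq_nonneg (min sd 0), sq_nonneg (min ed 0), sq_nonneg (min idv 0), sq_nonneg (min rdv 0), sq_nonneg (min mv 0)]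
  have e5 : (min sf 0) ^ 2 ≤ (min sh 0 ^ 2 + min eh 0 ^ 2 + min ihv 0 ^ 2 + min rhv 0 ^ 2 + min sf 0 ^ 2 + min ef 0 ^ 2 + min ifv 0 ^ 2 + min sd 0 ^ 2 + min ed 0 ^ 2 + min idv 0 ^ 2 + min rdv 0 ^ 2 + min mv 0 ^ 2) := by linarith only [sq_nonneg (min sh 0), sq_nonneg (min eh 0), sq_nonneg (min ihv 0), sq_nonneg (min rhv 0), sq_nonneg (min ef 0), sq_nonneg (min ifv 0), sq_nonneg (min sd 0), sq_nonneg (min ed 0), sq_nonneg (min idv 0), sq_nonneg (min rdv 0), sq_nonneg (min mv 0)]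
  have e6 : (min ef 0) ^ 2 ≤ (min sh 0 ^ 2 + min eh 0 ^ 2 + min ihv 0 ^ 2 + min rhv 0 ^ 2 + min sf 0 ^ 2 + min ef 0 ^ 2 + min ifv 0 ^ 2 + min sd 0 ^ 2 + min ed 0 ^ 2 + min idv 0 ^ 2 + min rdv 0 ^ 2 + min mv 0 ^ 2) := by linarith only [sq_nonneg (min sh 0), sq_nonneg (min eh 0), sq_nonneg (min ihv 0), sq_nonneg (min rhv 0), sq_nonneg (min sf 0), sq_nonneg (min ifv 0), sq_nonneg (min sd 0), sq_nonneg (min ed 0), sq_nonneg (min idv 0), sq_nonneg (min rdv 0), sq_nonneg (min mv 0)]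
  have e7 : (min ifv 0) ^ 2 ≤ (min sh 0 ^ 2 + min eh 0 ^ 2 + min ihv 0 ^ 2 + min rhv 0 ^ 2 + min sf 0 ^ 2 + min ef 0 ^ 2 + min ifv 0 ^ 2 + min sd 0 ^ 2 + min ed 0 ^ 2 + min idv 0 ^ 2 + min rdv 0 ^ 2 + min mv 0 ^ 2) := by linarith only [sq_nonneg (min sh 0), sq_nonneg (min eh 0), sq_nonneg (min ihv 0), sq_nonneg (min rhv 0), sq_nonneg (min sf 0), sq_nonneg (min ef 0), sq_nonneg (min sd 0), sq_nonneg (min ed 0), sq_nonneg (min idv 0), sq_nonneg (min rdv 0), sq_nonneg (min mv 0)]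
  have e8 : (min sd 0) ^ 2 ≤ (min sh 0 ^ 2 + min eh 0 ^ 2 + min ihv 0 ^ 2 + min rhv 0 ^ 2 + min sf 0 ^ 2 + min ef 0 ^ 2 + min ifv 0 ^ 2 + min sd 0 ^ 2 + min ed 0 ^ 2 + min idv 0 ^ 2 + min rdv 0 ^ 2 + min mv 0 ^ 2) := by linarith only [sq_nonneg (min sh 0), sq_nonneg (min eh 0), sq_nonneg (min ihv 0), sq_nonneg (min rhv 0), sq_nonneg (min sf 0), sq_nonneg (min ef 0), sq_nonneg (min ifv 0), sq_nonneg (min ed 0), sq_nonneg (min idv 0), sq_nonneg (min rdv 0), sq_nonneg (min mv 0)]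
  have e9 : (min ed 0) ^ 2 ≤ (min sh 0 ^ 2 + min eh 0 ^ 2 + min ihv 0 ^ 2 + min rhv 0 ^ 2 + min sf 0 ^ 2 + min ef 0 ^ 2 + min ifv 0 ^ 2 + min sd 0 ^ 2 + min ed 0 ^ 2 + min idv 0 ^ 2 + min rdv 0 ^ 2 + min mv 0 ^ 2) := by linarith only [sq_nonneg (min sh 0), sq_nonneg (min eh 0), sq_nonneg (min ihv 0), sq_nonneg (min rhv 0), sq_nonneg (min sf 0), sq_nonneg (min ef 0), sq_nonneg (min ifv 0), sq_nonneg (min sd 0), sq_nonneg (min idv 0), sq_nonneg (min rdv 0), sq_nonneg (min mv 0)]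
  have e10 : (min idv 0) ^ 2 ≤ (min sh 0 ^ 2 + min eh 0 ^ 2 + min ihv 0 ^ 2 + min rhv 0 ^ 2 + min sf 0 ^ 2 + min ef 0 ^ 2 + min ifv 0 ^ 2 + min sd 0 ^ 2 + min ed 0 ^ 2 + min idv 0 ^ 2 + min rdv 0 ^ 2 + min mv 0 ^ 2) := by linarith only [sq_nonneg (min sh 0), sq_nonneg (min eh 0), sq_nonneg (min ihv 0), sq_nonneg (min rhv 0), sq_nonneg (min sf 0), sq_nonneg (min ef 0), sq_nonneg (min ifv 0), sq_nonneg (min sd 0), sq_nonneg (min ed 0), sq_nonneg (min rdv 0), sq_nonneg (min mv 0)]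
  have e11 : (min rdv 0) ^ 2 ≤ (min sh 0 ^ 2 + min eh 0 ^ 2 + min ihv 0 ^ 2 + min rhv 0 ^ 2 + min sf 0 ^ 2 + min ef 0 ^ 2 + min ifv 0 ^ 2 + min sd 0 ^ 2 + min ed 0 ^ 2 + min idv 0 ^ 2 + min rdv 0 ^ 2 + min mv 0 ^ 2) := by linarith only [sq_nonneg (min sh 0), sq_nonneg (min eh 0), sq_nonneg (min ihv 0), sq_nonneg (min rhv 0), sq_nonneg (min sf 0), sq_nonneg (min ef 0), sq_nonneg (min ifv 0), sq_nonneg (min sd 0), sq_nonneg (min ed 0), sq_nonneg (min idv 0), sq_nonneg (min mv 0)]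
  have e12 : (min mv 0) ^ 2 ≤ (min sh 0 ^ 2 + min eh 0 ^ 2 + min ihv 0 ^ 2 + min rhv 0 ^ 2 + min sf 0 ^ 2 + min ef 0 ^ 2 + min ifv 0 ^ 2 + min sd 0 ^ 2 + min ed 0 ^ 2 + min idv 0 ^ 2 + min rdv 0 ^ 2 + min mv 0 ^ 2) := by linarith only [sq_nonneg (min sh 0), sq_nonneg (min eh 0), sq_nonneg (min ihv 0), sq_nonneg (min rhv 0), sq_nonneg (min sf 0), sq_nonneg (min ef 0), sq_nonneg (min ifv 0), sq_nonneg (min sd 0), sq_nonneg (min ed 0), sq_nonneg (min idv 0), sq_nonneg (min rdv 0)]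
  -- self products
  have s1 : (min sh 0) * sh = (min sh 0) ^ 2 := min_mul_self sh
  have s2 : (min eh 0) * eh = (min eh 0) ^ 2 := min_mul_self eh
  have s3 : (min ihv 0) * ihv = (min ihv 0) ^ 2 := min_mul_self ihv
  have s4 : (min rhv 0) * rhv = (min rhv 0) ^ 2 := min_mul_self rhv
  have s5 : (min sf 0) * sf = (min sf 0) ^ 2 := min_mul_self sf
  have s8 : (min sd 0) * sd = (min sd 0) ^ 2 := min_mul_self sd
  have s6 : (min ef 0) * ef = (min ef 0) ^ 2 := min_mul_self ef
  have s7 : (min ifv 0) * ifv = (min ifv 0) ^ 2 := min_mul_self ifv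
  have s9 : (min ed 0) * ed = (min ed 0) ^ 2 := min_mul_self ed
  have s10 : (min idv 0) * idv = (min idv 0) ^ 2 := min_mul_self idv
  have s11 : (min rdv 0) * rdv = (min rdv 0) ^ 2 := min_mul_self rdv
  have s12 : (min mv 0) * mv = (min mv 0) ^ 2 := min_mul_self mv
  -- lower bounds on the m's
  have n7 : -B ≤ (min ifv 0) := le_min (abs_le.1 hb7).1 (by linarith only [hB0])
  have n10 : -B ≤ (min idv 0) := le_min (abs_le.1 hb10).1 (by linarith only [hB0])
  have n12 : -B ≤ (min mv 0) := le_min (abs_le.1 hb12).1 (by linarith only [hB0])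
  -- bounds on ((1 - (u1 + u3)) * (tau1 * ifv + tau2 * idv + tau3 * lam))
  have t11 : tau1 * ifv ≤ tau1 * B := mul_le_mul_of_nonneg_left (abs_le.1 hb7).2 hptau1
  have t12 : tau2 * idv ≤ tau2 * B := mul_le_mul_of_nonneg_left (abs_le.1 hb10).2 hptau2
  have t13 : tau3 * lam ≤ tau3 * (B * c2) := mul_le_mul_of_nonneg_left hlam1 hptau3
  have t14 : tau1 * (min ifv 0) ≤ tau1 * ifv := mul_le_mul_of_nonneg_left (min_le_left _ _) hptau1
  have t15 : tau2 * (min idv 0) ≤ tau2 * idv := mul_le_mul_of_nonneg_left (min_le_left _ _) hptau2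
  have t16 : tau3 * (c2 * (min mv 0)) ≤ tau3 * lam := mul_le_mul_of_nonneg_left hlam3 hptau3
  have t17 : tau1 * (min ifv 0) ≤ 0 := np_mul' _ _ hptau1 q7
  have t18 : tau2 * (min idv 0) ≤ 0 := np_mul' _ _ hptau2 q10
  have t19 : c2 * (min mv 0) ≤ 0 := np_mul' _ _ hc20 q12
  have t20 : tau3 * (c2 * (min mv 0)) ≤ 0 := np_mul' _ _ hptau3 t19
  have hU10 : 0 ≤ tau1*B + tau2*B + tau3*(B*c2) := by positivity
  have hc1U : ((1 - (u1 + u3)) * (tau1 * ifv + tau2 * idv + tau3 * lam)) ≤ tau1*B + tau2*B + tau3*(B*c2) := by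
    exact e_mul_le _ _ _ he3a he3b (by linarith only [t11, t12, t13]) hU10
  have hc1W : tau1*(min ifv 0) + tau2*(min idv 0) + tau3*(c2*(min mv 0)) ≤ ((1 - (u1 + u3)) * (tau1 * ifv + tau2 * idv + tau3 * lam)) := by
    exact e_mul_ge _ _ _ he3a he3b (by linarith only [t14, t15, t16]) (by linarith only [t17, t18, t20])
  have hc1L : -(tau1*B + tau2*B + tau3*(B*c2)) ≤ ((1 - (u1 + u3)) * (tau1 * ifv + tau2 * idv + tau3 * lam)) := by
    have w1 := mul_le_mul_of_nonneg_left n7 hptau1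
    have w2 := mul_le_mul_of_nonneg_left n10 hptau2
    have w3 := mul_le_mul_of_nonneg_left (mul_le_mul_of_nonneg_left n12 hc20) hptau3
    linarith only [hc1W, w1, w2, w3]
  -- component 1 : S_H
  have f10 : (min sh 0) * th1 ≤ 0 := mul_np _ _ q1 hpth1
  have f11 : be3 * ((min sh 0) * rhv) ≤ be3 * (min sh 0 ^ 2 + min eh 0 ^ 2 + min ihv 0 ^ 2 + min rhv 0 ^ 2 + min sf 0 ^ 2 + min ef 0 ^ 2 + min ifv 0 ^ 2 + min sd 0 ^ 2 + min ed 0 ^ 2 + min idv 0 ^ 2 + min rdv 0 ^ 2 + min mv 0 ^ 2) := mul_le_mul_of_nonneg_left (mixQ (min sh 0) rhv (min sh 0 ^ 2 + min eh 0 ^ 2 + min ihv 0 ^ 2 + min rhv 0 ^ 2 + min sf 0 ^ 2 + min ef 0 ^ 2 + min ifv 0 ^ 2 + min sd 0 ^ 2 + min ed 0 ^ 2 + min idv 0 ^ 2 + min rdv 0 ^ 2 + min mv 0 ^ 2) q1 e1 e4) hpbe3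
  have f12 : 0 ≤ mu1 * ((min sh 0) * sh) := by rw [s1]; positivity
  have f13 : -(((1 - (u1 + u3)) * (tau1 * ifv + tau2 * idv + tau3 * lam)) * ((min sh 0) * sh)) ≤ (tau1*B + tau2*B + tau3*(B*c2)) * (min sh 0 ^ 2 + min eh 0 ^ 2 + min ihv 0 ^ 2 + min rhv 0 ^ 2 + min sf 0 ^ 2 + min ef 0 ^ 2 + min ifv 0 ^ 2 + min sd 0 ^ 2 + min ed 0 ^ 2 + min idv 0 ^ 2 + min rdv 0 ^ 2 + min mv 0 ^ 2) := by
    rw [s1]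
    have h1 : 0 ≤ (((1 - (u1 + u3)) * (tau1 * ifv + tau2 * idv + tau3 * lam)) + (tau1*B + tau2*B + tau3*(B*c2))) * (min sh 0) ^ 2 :=
      mul_nonneg (by linarith only [hc1L]) (sq_nonneg (min sh 0))
    have h2 : (tau1*B + tau2*B + tau3*(B*c2)) * (min sh 0) ^ 2 ≤ (tau1*B + tau2*B + tau3*(B*c2)) * (min sh 0 ^ 2 + min eh 0 ^ 2 + min ihv 0 ^ 2 + min rhv 0 ^ 2 + min sf 0 ^ 2 + min ef 0 ^ 2 + min ifv 0 ^ 2 + min sd 0 ^ 2 + min ed 0 ^ 2 + min idv 0 ^ 2 + min rdv 0 ^ 2 + min mv 0 ^ 2) :=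
      mul_le_mul_of_nonneg_left e1 hU10
    linarith only [h1, h2]
  have comp1 : 2 * (min sh 0) * (th1 + be3 * rhv - mu1 * sh - ((1 - (u1 + u3)) * (tau1 * ifv + tau2 * idv + tau3 * lam)) * sh)
      ≤ 2 * (be3 + (tau1*B + tau2*B + tau3*(B*c2))) * (min sh 0 ^ 2 + min eh 0 ^ 2 + min ihv 0 ^ 2 + min rhv 0 ^ 2 + min sf 0 ^ 2 + min ef 0 ^ 2 + min ifv 0 ^ 2 + min sd 0 ^ 2 + min ed 0 ^ 2 + min idv 0 ^ 2 + min rdv 0 ^ 2 + min mv 0 ^ 2) := by linarith only [f10, f11, f12, f13]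
  -- component 2 : E_H
  have hW1_0 : tau1*(min ifv 0) + tau2*(min idv 0) + tau3*(c2*(min mv 0)) ≤ 0 := by linarith only [t17, t18, t20]
  have hlow1 : (tau1*B + tau2*B + tau3*(B*c2)) * (min sh 0)
      + B * (tau1*(min ifv 0) + tau2*(min idv 0) + tau3*(c2*(min mv 0))) ≤ ((1 - (u1 + u3)) * (tau1 * ifv + tau2 * idv + tau3 * lam)) * sh :=
    lower_cS ((1 - (u1 + u3)) * (tau1 * ifv + tau2 * idv + tau3 * lam)) sh _ _ B hc1U hc1W hW1_0 (abs_le.1 hb1).2 hB0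
  have hprod1 : (min eh 0) * (((1 - (u1 + u3)) * (tau1 * ifv + tau2 * idv + tau3 * lam)) * sh) ≤ (min eh 0) * ((tau1*B + tau2*B + tau3*(B*c2)) * (min sh 0)
      + B * (tau1*(min ifv 0) + tau2*(min idv 0) + tau3*(c2*(min mv 0)))) := mul_le_mul_of_nonpos_left hlow1 q2
  have g11 : (tau1*B + tau2*B + tau3*(B*c2)) * ((min eh 0)*(min sh 0)) ≤ (tau1*B + tau2*B + tau3*(B*c2)) * (min sh 0 ^ 2 + min eh 0 ^ 2 + min ihv 0 ^ 2 + min rhv 0 ^ 2 + min sf 0 ^ 2 + min ef 0 ^ 2 + min ifv 0 ^ 2 + min sd 0 ^ 2 + min ed 0 ^ 2 + min idv 0 ^ 2 + min rdv 0 ^ 2 + min mv 0 ^ 2) :=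
    mul_le_mul_of_nonneg_left (prodQ (min eh 0) (min sh 0) (min sh 0 ^ 2 + min eh 0 ^ 2 + min ihv 0 ^ 2 + min rhv 0 ^ 2 + min sf 0 ^ 2 + min ef 0 ^ 2 + min ifv 0 ^ 2 + min sd 0 ^ 2 + min ed 0 ^ 2 + min idv 0 ^ 2 + min rdv 0 ^ 2 + min mv 0 ^ 2) e2 e1) hU10
  have g12 : B*tau1*((min eh 0)*(min ifv 0)) ≤ B*tau1*(min sh 0 ^ 2 + min eh 0 ^ 2 + min ihv 0 ^ 2 + min rhv 0 ^ 2 + min sf 0 ^ 2 + min ef 0 ^ 2 + min ifv 0 ^ 2 + min sd 0 ^ 2 + min ed 0 ^ 2 + min idv 0 ^ 2 + min rdv 0 ^ 2 + min mv 0 ^ 2) := mul_le_mul_of_nonneg_left (prodQ (min eh 0) (min ifv 0) (min sh 0 ^ 2 + min eh 0 ^ 2 + min ihv 0 ^ 2 + min rhv 0 ^ 2 + min sf 0 ^ 2 + min ef 0 ^ 2 + min ifv 0 ^ 2 + min sd 0 ^ 2 + min ed 0 ^ 2 + min idv 0 ^ 2 + min rdv 0 ^ 2 + min mv 0 ^ 2)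 e2 e7) (by positivity)
  have g13 : B*tau2*((min eh 0)*(min idv 0)) ≤ B*tau2*(min sh 0 ^ 2 + min eh 0 ^ 2 + min ihv 0 ^ 2 + min rhv 0 ^ 2 + min sf 0 ^ 2 + min ef 0 ^ 2 + min ifv 0 ^ 2 + min sd 0 ^ 2 + min ed 0 ^ 2 + min idv 0 ^ 2 + min rdv 0 ^ 2 + min mv 0 ^ 2) := mul_le_mul_of_nonneg_left (prodQ (min eh 0) (min idv 0) (min sh 0 ^ 2 + min eh 0 ^ 2 + min ihv 0 ^ 2 + min rhv 0 ^ 2 + min sf 0 ^ 2 + min ef 0 ^ 2 + min ifv 0 ^ 2 + min sd 0 ^ 2 + min ed 0 ^ 2 + min idv 0 ^ 2 + min rdv 0 ^ 2 + min mv 0 ^ 2) e2 e10) (by positivity)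
  have g14 : B*(tau3*c2)*((min eh 0)*(min mv 0)) ≤ B*(tau3*c2)*(min sh 0 ^ 2 + min eh 0 ^ 2 + min ihv 0 ^ 2 + min rhv 0 ^ 2 + min sf 0 ^ 2 + min ef 0 ^ 2 + min ifv 0 ^ 2 + min sd 0 ^ 2 + min ed 0 ^ 2 + min idv 0 ^ 2 + min rdv 0 ^ 2 + min mv 0 ^ 2) := mul_le_mul_of_nonneg_left (prodQ (min eh 0) (min mv 0) (min sh 0 ^ 2 + min eh 0 ^ 2 + min ihv 0 ^ 2 + min rhv 0 ^ 2 + min sf 0 ^ 2 + min ef 0 ^ 2 + min ifv 0 ^ 2 + min sd 0 ^ 2 + min ed 0 ^ 2 + min idv 0 ^ 2 + min rdv 0 ^ 2 + min mv 0 ^ 2) e2 e12) (by positivity)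
  have g15 : 0 ≤ (mu1+be1+be2+u4) * ((min eh 0)*eh) := by rw [s2]; positivity
  have comp2 : 2 * (min eh 0) * (((1 - (u1 + u3)) * (tau1 * ifv + tau2 * idv + tau3 * lam)) * sh - (mu1 + be1 + be2 + u4) * eh)
      ≤ 2 * ((tau1*B + tau2*B + tau3*(B*c2)) + B*tau1 + B*tau2 + B*(tau3*c2)) * (min sh 0 ^ 2 + min eh 0 ^ 2 + min ihv 0 ^ 2 + min rhv 0 ^ 2 + min sf 0 ^ 2 + min ef 0 ^ 2 + min ifv 0 ^ 2 + min sd 0 ^ 2 + min ed 0 ^ 2 + min idv 0 ^ 2 + min rdv 0 ^ 2 + min mv 0 ^ 2) := by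
    linarith only [hprod1, g11, g12, g13, g14, g15]
  -- component 3 : I_H
  have comp3 : 2 * (min ihv 0) * (be1 * eh - (si1 + mu1) * ihv) ≤ 2 * be1 * (min sh 0 ^ 2 + min eh 0 ^ 2 + min ihv 0 ^ 2 + min rhv 0 ^ 2 + min sf 0 ^ 2 + min ef 0 ^ 2 + min ifv 0 ^ 2 + min sd 0 ^ 2 + min ed 0 ^ 2 + min idv 0 ^ 2 + min rdv 0 ^ 2 + min mv 0 ^ 2) := by
    have g1 : be1 * ((min ihv 0)*eh) ≤ be1 * (min sh 0 ^ 2 + min eh 0 ^ 2 + min ihv 0 ^ 2 + min rhv 0 ^ 2 + min sf 0 ^ 2 + min ef 0 ^ 2 + min ifv 0 ^ 2 + min sd 0 ^ 2 + min ed 0 ^ 2 + min idv 0 ^ 2 + min rdv 0 ^ 2 + min mv 0 ^ 2) := mul_le_mul_of_nonneg_left (mixQ (min ihv 0) eh (min sh 0 ^ 2 + min eh 0 ^ 2 + min ihv 0 ^ 2 + min rhv 0 ^ 2 + min sf 0 ^ 2 + min ef 0 ^ 2 + min ifv 0 ^ 2 + min sd 0 ^ 2 + min ed 0 ^ 2 +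 min idv 0 ^ 2 + min rdv 0 ^ 2 + min mv 0 ^ 2) q3 e3 e2) hpbe1
    have g2 : 0 ≤ (si1+mu1) * ((min ihv 0)*ihv) := by rw [s3]; positivity
    linarith only [g1, g2]
  -- component 4 : R_H
  have comp4 : 2 * (min rhv 0) * ((be2 + u4) * eh - (be3 + mu1) * rhv) ≤ 2 * (be2 + 1) * (min sh 0 ^ 2 + min eh 0 ^ 2 + min ihv 0 ^ 2 + min rhv 0 ^ 2 + min sf 0 ^ 2 + min ef 0 ^ 2 + min ifv 0 ^ 2 + min sd 0 ^ 2 + min ed 0 ^ 2 + min idv 0 ^ 2 + min rdv 0 ^ 2 + min mv 0 ^ 2) := by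
    have g1 : (be2+u4) * ((min rhv 0)*eh) ≤ (be2+u4) * (min sh 0 ^ 2 + min eh 0 ^ 2 + min ihv 0 ^ 2 + min rhv 0 ^ 2 + min sf 0 ^ 2 + min ef 0 ^ 2 + min ifv 0 ^ 2 + min sd 0 ^ 2 + min ed 0 ^ 2 + min idv 0 ^ 2 + min rdv 0 ^ 2 + min mv 0 ^ 2) :=
      mul_le_mul_of_nonneg_left (mixQ (min rhv 0) eh (min sh 0 ^ 2 + min eh 0 ^ 2 + min ihv 0 ^ 2 + min rhv 0 ^ 2 + min sf 0 ^ 2 + min ef 0 ^ 2 + min ifv 0 ^ 2 + min sd 0 ^ 2 + min ed 0 ^ 2 + min idv 0 ^ 2 + min rdv 0 ^ 2 + min mv 0 ^ 2) q4 e4 e2) (by linarith only [hpbe2, hu40])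
    have g2 : (be2+u4) * (min sh 0 ^ 2 + min eh 0 ^ 2 + min ihv 0 ^ 2 + min rhv 0 ^ 2 + min sf 0 ^ 2 + min ef 0 ^ 2 + min ifv 0 ^ 2 + min sd 0 ^ 2 + min ed 0 ^ 2 + min idv 0 ^ 2 + min rdv 0 ^ 2 + min mv 0 ^ 2) ≤ (be2+1) * (min sh 0 ^ 2 + min eh 0 ^ 2 + min ihv 0 ^ 2 + min rhv 0 ^ 2 + min sf 0 ^ 2 + min ef 0 ^ 2 + min ifv 0 ^ 2 + min sd 0 ^ 2 + min ed 0 ^ 2 + min idv 0 ^ 2 + min rdv 0 ^ 2 + min mv 0 ^ 2) := mul_le_mul_of_nonneg_right (by linarith only [hu41]) hQ0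
    have g3 : 0 ≤ (be3+mu1) * ((min rhv 0)*rhv) := by rw [s4]; positivity
    linarith only [g1, g2, g3]
  -- bounds on (ka1 * ifv + ka2 * idv + ka3 * lam)
  have k11 : ka1 * ifv ≤ ka1 * B := mul_le_mul_of_nonneg_left (abs_le.1 hb7).2 hpka1
  have k12 : ka2 * idv ≤ ka2 * B := mul_le_mul_of_nonneg_left (abs_le.1 hb10).2 hpka2
  have k13 : ka3 * lam ≤ ka3 * (B * c2) := mul_le_mul_of_nonneg_left hlam1 hpka3
  have k14 : ka1 * (min ifv 0) ≤ ka1 * ifv := mul_le_mul_of_nonneg_left (min_le_left _ _) hpka1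
  have k15 : ka2 * (min idv 0) ≤ ka2 * idv := mul_le_mul_of_nonneg_left (min_le_left _ _) hpka2
  have k16 : ka3 * (c2 * (min mv 0)) ≤ ka3 * lam := mul_le_mul_of_nonneg_left hlam3 hpka3
  have k17 : ka1 * (min ifv 0) ≤ 0 := np_mul' _ _ hpka1 q7
  have k18 : ka2 * (min idv 0) ≤ 0 := np_mul' _ _ hpka2 q10
  have k20 : ka3 * (c2 * (min mv 0)) ≤ 0 := np_mul' _ _ hpka3 t19
  have hU20 : 0 ≤ ka1*B + ka2*B + ka3*(B*c2) := by positivity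
  have hc4U : (ka1 * ifv + ka2 * idv + ka3 * lam) ≤ ka1*B + ka2*B + ka3*(B*c2) := by linarith only [k11, k12, k13]
  have hc4W : ka1*(min ifv 0) + ka2*(min idv 0) + ka3*(c2*(min mv 0)) ≤ (ka1 * ifv + ka2 * idv + ka3 * lam) := by linarith only [k14, k15, k16]
  have hc4L : -(ka1*B + ka2*B + ka3*(B*c2)) ≤ (ka1 * ifv + ka2 * idv + ka3 * lam) := by
    have w1 := mul_le_mul_of_nonneg_left n7 hpka1
    have w2 := mul_le_mul_of_nonneg_left n10 hpka2
    have w3 := mul_le_mul_of_nonneg_left (mul_le_mul_of_nonneg_left n12 hc20) hpka3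
    linarith only [hc4W, w1, w2, w3]
  -- component 5 : S_F
  have comp5 : 2 * (min sf 0) * (th2 - (ka1 * ifv + ka2 * idv + ka3 * lam) * sf - mu2 * sf) ≤ 2 * (ka1*B + ka2*B + ka3*(B*c2)) * (min sh 0 ^ 2 + min eh 0 ^ 2 + min ihv 0 ^ 2 + min rhv 0 ^ 2 + min sf 0 ^ 2 + min ef 0 ^ 2 + min ifv 0 ^ 2 + min sd 0 ^ 2 + min ed 0 ^ 2 + min idv 0 ^ 2 + min rdv 0 ^ 2 + min mv 0 ^ 2) := by
    have f1 : (min sf 0) * th2 ≤ 0 := mul_np _ _ q5 hpth2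
    have f2 : 0 ≤ mu2 * ((min sf 0)*sf) := by rw [s5]; positivity
    have f3 : -((ka1 * ifv + ka2 * idv + ka3 * lam) * ((min sf 0)*sf)) ≤ (ka1*B + ka2*B + ka3*(B*c2)) * (min sh 0 ^ 2 + min eh 0 ^ 2 + min ihv 0 ^ 2 + min rhv 0 ^ 2 + min sf 0 ^ 2 + min ef 0 ^ 2 + min ifv 0 ^ 2 + min sd 0 ^ 2 + min ed 0 ^ 2 + min idv 0 ^ 2 + min rdv 0 ^ 2 + min mv 0 ^ 2) := by
      rw [s5]
      have h1 : 0 ≤ ((ka1 * ifv + ka2 * idv + ka3 * lam) + (ka1*B + ka2*B + ka3*(B*c2))) * (min sf 0) ^ 2 :=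
        mul_nonneg (by linarith only [hc4L]) (sq_nonneg (min sf 0))
      have h2 := mul_le_mul_of_nonneg_left e5 hU20
      linarith only [h1, h2]
    linarith only [f1, f2, f3]
  -- component 6 : E_F
  have hW2_0 : ka1*(min ifv 0) + ka2*(min idv 0) + ka3*(c2*(min mv 0)) ≤ 0 := by linarith only [k17, k18, k20]
  have hlow2 : (ka1*B + ka2*B + ka3*(B*c2)) * (min sf 0)
      + B * (ka1*(min ifv 0) + ka2*(min idv 0) + ka3*(c2*(min mv 0))) ≤ (ka1 * ifv + ka2 * idv + ka3 * lam) * sf :=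
    lower_cS (ka1 * ifv + ka2 * idv + ka3 * lam) sf _ _ B hc4U hc4W hW2_0 (abs_le.1 hb5).2 hB0
  have hprod2 : (min ef 0) * ((ka1 * ifv + ka2 * idv + ka3 * lam) * sf) ≤ (min ef 0) * ((ka1*B + ka2*B + ka3*(B*c2)) * (min sf 0)
      + B * (ka1*(min ifv 0) + ka2*(min idv 0) + ka3*(c2*(min mv 0)))) := mul_le_mul_of_nonpos_left hlow2 q6
  have g21 : (ka1*B + ka2*B + ka3*(B*c2)) * ((min ef 0)*(min sf 0)) ≤ (ka1*B + ka2*B + ka3*(B*c2)) * (min sh 0 ^ 2 + min eh 0 ^ 2 + min ihv 0 ^ 2 + min rhv 0 ^ 2 + min sf 0 ^ 2 + min ef 0 ^ 2 + min ifv 0 ^ 2 + min sd 0 ^ 2 + min ed 0 ^ 2 + min idv 0 ^ 2 + min rdv 0 ^ 2 + min mv 0 ^ 2) :=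
    mul_le_mul_of_nonneg_left (prodQ (min ef 0) (min sf 0) (min sh 0 ^ 2 + min eh 0 ^ 2 + min ihv 0 ^ 2 + min rhv 0 ^ 2 + min sf 0 ^ 2 + min ef 0 ^ 2 + min ifv 0 ^ 2 + min sd 0 ^ 2 + min ed 0 ^ 2 + min idv 0 ^ 2 + min rdv 0 ^ 2 + min mv 0 ^ 2) e6 e5) hU20
  have g22 : B*ka1*((min ef 0)*(min ifv 0)) ≤ B*ka1*(min sh 0 ^ 2 + min eh 0 ^ 2 + min ihv 0 ^ 2 + min rhv 0 ^ 2 + min sf 0 ^ 2 + min ef 0 ^ 2 + min ifv 0 ^ 2 + min sd 0 ^ 2 + min ed 0 ^ 2 + min idv 0 ^ 2 + min rdv 0 ^ 2 + min mv 0 ^ 2) := mul_le_mul_of_nonneg_left (prodQ (min ef 0) (min ifv 0) (min sh 0 ^ 2 + min eh 0 ^ 2 + min ihv 0 ^ 2 + min rhv 0 ^ 2 + min sf 0 ^ 2 + min ef 0 ^ 2 + min ifv 0 ^ 2 + min sd 0 ^ 2 + min ed 0 ^ 2 + min idv 0 ^ 2 + min rdv 0 ^ 2 + min mv 0 ^ 2)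 e6 e7) (by positivity)
  have g23 : B*ka2*((min ef 0)*(min idv 0)) ≤ B*ka2*(min sh 0 ^ 2 + min eh 0 ^ 2 + min ihv 0 ^ 2 + min rhv 0 ^ 2 + min sf 0 ^ 2 + min ef 0 ^ 2 + min ifv 0 ^ 2 + min sd 0 ^ 2 + min ed 0 ^ 2 + min idv 0 ^ 2 + min rdv 0 ^ 2 + min mv 0 ^ 2) := mul_le_mul_of_nonneg_left (prodQ (min ef 0) (min idv 0) (min sh 0 ^ 2 + min eh 0 ^ 2 + min ihv 0 ^ 2 + min rhv 0 ^ 2 + min sf 0 ^ 2 + min ef 0 ^ 2 + min ifv 0 ^ 2 + min sd 0 ^ 2 + min ed 0 ^ 2 + min idv 0 ^ 2 + min rdv 0 ^ 2 + min mv 0 ^ 2) e6 e10) (by positivity)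
  have g24 : B*(ka3*c2)*((min ef 0)*(min mv 0)) ≤ B*(ka3*c2)*(min sh 0 ^ 2 + min eh 0 ^ 2 + min ihv 0 ^ 2 + min rhv 0 ^ 2 + min sf 0 ^ 2 + min ef 0 ^ 2 + min ifv 0 ^ 2 + min sd 0 ^ 2 + min ed 0 ^ 2 + min idv 0 ^ 2 + min rdv 0 ^ 2 + min mv 0 ^ 2) := mul_le_mul_of_nonneg_left (prodQ (min ef 0) (min mv 0) (min sh 0 ^ 2 + min eh 0 ^ 2 + min ihv 0 ^ 2 + min rhv 0 ^ 2 + min sf 0 ^ 2 + min ef 0 ^ 2 + min ifv 0 ^ 2 + min sd 0 ^ 2 + min ed 0 ^ 2 + min idv 0 ^ 2 + min rdv 0 ^ 2 + min mv 0 ^ 2) e6 e12) (by positivity)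
  have g25 : 0 ≤ (mu2+ga) * ((min ef 0)*ef) := by rw [s6]; positivity
  have comp6 : 2 * (min ef 0) * ((ka1 * ifv + ka2 * idv + ka3 * lam) * sf - (mu2 + ga) * ef)
      ≤ 2 * ((ka1*B + ka2*B + ka3*(B*c2)) + B*ka1 + B*ka2 + B*(ka3*c2)) * (min sh 0 ^ 2 + min eh 0 ^ 2 + min ihv 0 ^ 2 + min rhv 0 ^ 2 + min sf 0 ^ 2 + min ef 0 ^ 2 + min ifv 0 ^ 2 + min sd 0 ^ 2 + min ed 0 ^ 2 + min idv 0 ^ 2 + min rdv 0 ^ 2 + min mv 0 ^ 2) := by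
    linarith only [hprod2, g21, g22, g23, g24, g25]
  -- component 7 : I_F
  have comp7 : 2 * (min ifv 0) * (ga * ef - (mu2 + si2) * ifv) ≤ 2 * ga * (min sh 0 ^ 2 + min eh 0 ^ 2 + min ihv 0 ^ 2 + min rhv 0 ^ 2 + min sf 0 ^ 2 + min ef 0 ^ 2 + min ifv 0 ^ 2 + min sd 0 ^ 2 + min ed 0 ^ 2 + min idv 0 ^ 2 + min rdv 0 ^ 2 + min mv 0 ^ 2) := by
    have g1 : ga * ((min ifv 0)*ef) ≤ ga * (min sh 0 ^ 2 + min eh 0 ^ 2 + min ihv 0 ^ 2 + min rhv 0 ^ 2 + min sf 0 ^ 2 + min ef 0 ^ 2 + min ifv 0 ^ 2 + min sd 0 ^ 2 + min ed 0 ^ 2 + min idv 0 ^ 2 + min rdv 0 ^ 2 + min mv 0 ^ 2) := mul_le_mul_of_nonneg_left (mixQ (min ifv 0) ef (min sh 0 ^ 2 + min eh 0 ^ 2 + min ihv 0 ^ 2 + min rhv 0 ^ 2 + min sf 0 ^ 2 + min ef 0 ^ 2 + min ifv 0 ^ 2 + min sd 0 ^ 2 + min ed 0 ^ 2 + min idv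 0 ^ 2 + min rdv 0 ^ 2 + min mv 0 ^ 2) q7 e7 e6) hpga
    have g2 : 0 ≤ (mu2+si2) * ((min ifv 0)*ifv) := by rw [s7]; positivity
    linarith only [g1, g2]
  -- bounds on ((1 - (u1 + u2)) * (ps1 * ifv / (1 + rh1) + ps2 * idv / (1 + rh2) + ps3 * lam / (1 + rh3)))
  have d11 : ps1 * ifv / (1 + rh1) ≤ ps1 * B :=
    div_ub _ _ _ hprh1 (mul_le_mul_of_nonneg_left (abs_le.1 hb7).2 hpps1) (by positivity)
  have d12 : ps2 * idv / (1 + rh2) ≤ ps2 * B :=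
    div_ub _ _ _ hprh2 (mul_le_mul_of_nonneg_left (abs_le.1 hb10).2 hpps2) (by positivity)
  have d13 : ps3 * lam / (1 + rh3) ≤ ps3 * (B * c2) :=
    div_ub _ _ _ hprh3 (mul_le_mul_of_nonneg_left hlam1 hpps3) (by positivity)
  have p17 : ps1 * (min ifv 0) ≤ 0 := np_mul' _ _ hpps1 q7
  have p18 : ps2 * (min idv 0) ≤ 0 := np_mul' _ _ hpps2 q10
  have p20 : ps3 * (c2 * (min mv 0)) ≤ 0 := np_mul' _ _ hpps3 t19
  have d14 : ps1 * (min ifv 0) ≤ ps1 * ifv / (1 + rh1) :=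
    div_lb _ _ _ hprh1 (mul_le_mul_of_nonneg_left (min_le_left _ _) hpps1) p17
  have d15 : ps2 * (min idv 0) ≤ ps2 * idv / (1 + rh2) :=
    div_lb _ _ _ hprh2 (mul_le_mul_of_nonneg_left (min_le_left _ _) hpps2) p18
  have d16 : ps3 * (c2 * (min mv 0)) ≤ ps3 * lam / (1 + rh3) :=
    div_lb _ _ _ hprh3 (mul_le_mul_of_nonneg_left hlam3 hpps3) p20
  have hU30 : 0 ≤ ps1*B + ps2*B + ps3*(B*c2) := by positivity
  have hc5U : ((1 - (u1 + u2)) * (ps1 * ifv / (1 + rh1) + ps2 * idv / (1 + rh2) + ps3 * lam / (1 + rh3))) ≤ ps1*B + ps2*B + ps3*(B*c2) := by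
    exact e_mul_le _ _ _ he2a he2b (by linarith only [d11, d12, d13]) hU30
  have hc5W : ps1*(min ifv 0) + ps2*(min idv 0) + ps3*(c2*(min mv 0)) ≤ ((1 - (u1 + u2)) * (ps1 * ifv / (1 + rh1) + ps2 * idv / (1 + rh2) + ps3 * lam / (1 + rh3))) := by
    exact e_mul_ge _ _ _ he2a he2b (by linarith only [d14, d15, d16]) (by linarith only [p17, p18, p20])
  have hc5L : -(ps1*B + ps2*B + ps3*(B*c2)) ≤ ((1 - (u1 + u2)) * (ps1 * ifv / (1 + rh1) + ps2 * idv / (1 + rh2) + ps3 * lam / (1 + rh3))) := by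
    have w1 := mul_le_mul_of_nonneg_left n7 hpps1
    have w2 := mul_le_mul_of_nonneg_left n10 hpps2
    have w3 := mul_le_mul_of_nonneg_left (mul_le_mul_of_nonneg_left n12 hc20) hpps3
    linarith only [hc5W, w1, w2, w3]
  -- component 8 : S_D
  have comp8 : 2 * (min sd 0) * (th3 - mu3 * sd - ((1 - (u1 + u2)) * (ps1 * ifv / (1 + rh1) + ps2 * idv / (1 + rh2) + ps3 * lam / (1 + rh3))) * sd + ga3 * rdv)
      ≤ 2 * ((ps1*B + ps2*B + ps3*(B*c2)) + ga3) * (min sh 0 ^ 2 + min eh 0 ^ 2 + min ihv 0 ^ 2 + min rhv 0 ^ 2 + min sf 0 ^ 2 + min ef 0 ^ 2 + min ifv 0 ^ 2 + min sd 0 ^ 2 + min ed 0 ^ 2 + min idv 0 ^ 2 + min rdv 0 ^ 2 + min mv 0 ^ 2) := by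
    have f1 : (min sd 0) * th3 ≤ 0 := mul_np _ _ q8 hpth3
    have f2 : 0 ≤ mu3 * ((min sd 0)*sd) := by rw [s8]; positivity
    have f3 : -(((1 - (u1 + u2)) * (ps1 * ifv / (1 + rh1) + ps2 * idv / (1 + rh2) + ps3 * lam / (1 + rh3))) * ((min sd 0)*sd)) ≤ (ps1*B + ps2*B + ps3*(B*c2)) * (min sh 0 ^ 2 + min eh 0 ^ 2 + min ihv 0 ^ 2 + min rhv 0 ^ 2 + min sf 0 ^ 2 + min ef 0 ^ 2 + min ifv 0 ^ 2 + min sd 0 ^ 2 + min ed 0 ^ 2 + min idv 0 ^ 2 + min rdv 0 ^ 2 + min mv 0 ^ 2) := by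
      rw [s8]
      have h1 : 0 ≤ (((1 - (u1 + u2)) * (ps1 * ifv / (1 + rh1) + ps2 * idv / (1 + rh2) + ps3 * lam / (1 + rh3))) + (ps1*B + ps2*B + ps3*(B*c2))) * (min sd 0) ^ 2 :=
        mul_nonneg (by linarith only [hc5L]) (sq_nonneg (min sd 0))
      have h2 := mul_le_mul_of_nonneg_left e8 hU30
      linarith only [h1, h2]
    have f4 : ga3 * ((min sd 0)*rdv) ≤ ga3 * (min sh 0 ^ 2 + min eh 0 ^ 2 + min ihv 0 ^ 2 + min rhv 0 ^ 2 + min sf 0 ^ 2 + min ef 0 ^ 2 + min ifv 0 ^ 2 + min sd 0 ^ 2 + min ed 0 ^ 2 + min idv 0 ^ 2 + min rdv 0 ^ 2 + min mv 0 ^ 2) := mul_le_mul_of_nonneg_left (mixQ (min sd 0) rdv (min sh 0 ^ 2 + min eh 0 ^ 2 + min ihv 0 ^ 2 + min rhv 0 ^ 2 + min sf 0 ^ 2 + min ef 0 ^ 2 + min ifv 0 ^ 2 + min sd 0 ^ 2 + min ed 0 ^ 2 + min idv 0 ^ 2 + min rdv 0 ^ 2 + min mv 0 ^ 2) q8 e8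 e11) hpga3
    linarith only [f1, f2, f3, f4]
  -- component 9 : E_D
  have hW3_0 : ps1*(min ifv 0) + ps2*(min idv 0) + ps3*(c2*(min mv 0)) ≤ 0 := by linarith only [p17, p18, p20]
  have hlow3 : (ps1*B + ps2*B + ps3*(B*c2)) * (min sd 0)
      + B * (ps1*(min ifv 0) + ps2*(min idv 0) + ps3*(c2*(min mv 0))) ≤ ((1 - (u1 + u2)) * (ps1 * ifv / (1 + rh1) + ps2 * idv / (1 + rh2) + ps3 * lam / (1 + rh3))) * sd :=
    lower_cS ((1 - (u1 + u2)) * (ps1 * ifv / (1 + rh1) + ps2 * idv / (1 + rh2) + ps3 * lam / (1 + rh3))) sd _ _ B hc5U hc5W hW3_0 (abs_le.1 hb8).2 hB0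
  have hprod3 : (min ed 0) * (((1 - (u1 + u2)) * (ps1 * ifv / (1 + rh1) + ps2 * idv / (1 + rh2) + ps3 * lam / (1 + rh3))) * sd) ≤ (min ed 0) * ((ps1*B + ps2*B + ps3*(B*c2)) * (min sd 0)
      + B * (ps1*(min ifv 0) + ps2*(min idv 0) + ps3*(c2*(min mv 0)))) := mul_le_mul_of_nonpos_left hlow3 q9
  have g31 : (ps1*B + ps2*B + ps3*(B*c2)) * ((min ed 0)*(min sd 0)) ≤ (ps1*B + ps2*B + ps3*(B*c2)) * (min sh 0 ^ 2 + min eh 0 ^ 2 + min ihv 0 ^ 2 + min rhv 0 ^ 2 + min sf 0 ^ 2 + min ef 0 ^ 2 + min ifv 0 ^ 2 + min sd 0 ^ 2 + min ed 0 ^ 2 + min idv 0 ^ 2 + min rdv 0 ^ 2 + min mv 0 ^ 2) :=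
    mul_le_mul_of_nonneg_left (prodQ (min ed 0) (min sd 0) (min sh 0 ^ 2 + min eh 0 ^ 2 + min ihv 0 ^ 2 + min rhv 0 ^ 2 + min sf 0 ^ 2 + min ef 0 ^ 2 + min ifv 0 ^ 2 + min sd 0 ^ 2 + min ed 0 ^ 2 + min idv 0 ^ 2 + min rdv 0 ^ 2 + min mv 0 ^ 2) e9 e8) hU30
  have g32 : B*ps1*((min ed 0)*(min ifv 0)) ≤ B*ps1*(min sh 0 ^ 2 + min eh 0 ^ 2 + min ihv 0 ^ 2 + min rhv 0 ^ 2 + min sf 0 ^ 2 + min ef 0 ^ 2 + min ifv 0 ^ 2 + min sd 0 ^ 2 + min ed 0 ^ 2 + min idv 0 ^ 2 + min rdv 0 ^ 2 + min mv 0 ^ 2) := mul_le_mul_of_nonneg_left (prodQ (min ed 0) (min ifv 0) (min sh 0 ^ 2 + min eh 0 ^ 2 + min ihv 0 ^ 2 + min rhv 0 ^ 2 + min sf 0 ^ 2 + min ef 0 ^ 2 + min ifv 0 ^ 2 + min sd 0 ^ 2 + min ed 0 ^ 2 + min idv 0 ^ 2 + min rdv 0 ^ 2 + min mv 0 ^ 2)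 e9 e7) (by positivity)
  have g33 : B*ps2*((min ed 0)*(min idv 0)) ≤ B*ps2*(min sh 0 ^ 2 + min eh 0 ^ 2 + min ihv 0 ^ 2 + min rhv 0 ^ 2 + min sf 0 ^ 2 + min ef 0 ^ 2 + min ifv 0 ^ 2 + min sd 0 ^ 2 + min ed 0 ^ 2 + min idv 0 ^ 2 + min rdv 0 ^ 2 + min mv 0 ^ 2) := mul_le_mul_of_nonneg_left (prodQ (min ed 0) (min idv 0) (min sh 0 ^ 2 + min eh 0 ^ 2 + min ihv 0 ^ 2 + min rhv 0 ^ 2 + min sf 0 ^ 2 + min ef 0 ^ 2 + min ifv 0 ^ 2 + min sd 0 ^ 2 + min ed 0 ^ 2 + min idv 0 ^ 2 + min rdv 0 ^ 2 + min mv 0 ^ 2) e9 e10) (by positivity)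
  have g34 : B*(ps3*c2)*((min ed 0)*(min mv 0)) ≤ B*(ps3*c2)*(min sh 0 ^ 2 + min eh 0 ^ 2 + min ihv 0 ^ 2 + min rhv 0 ^ 2 + min sf 0 ^ 2 + min ef 0 ^ 2 + min ifv 0 ^ 2 + min sd 0 ^ 2 + min ed 0 ^ 2 + min idv 0 ^ 2 + min rdv 0 ^ 2 + min mv 0 ^ 2) := mul_le_mul_of_nonneg_left (prodQ (min ed 0) (min mv 0) (min sh 0 ^ 2 + min eh 0 ^ 2 + min ihv 0 ^ 2 + min rhv 0 ^ 2 + min sf 0 ^ 2 + min ef 0 ^ 2 + min ifv 0 ^ 2 + min sd 0 ^ 2 + min ed 0 ^ 2 + min idv 0 ^ 2 + min rdv 0 ^ 2 + min mv 0 ^ 2) e9 e12) (by positivity)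
  have g35 : 0 ≤ (mu3+ga1+ga2+u4) * ((min ed 0)*ed) := by rw [s9]; positivity
  have comp9 : 2 * (min ed 0) * (((1 - (u1 + u2)) * (ps1 * ifv / (1 + rh1) + ps2 * idv / (1 + rh2) + ps3 * lam / (1 + rh3))) * sd - (mu3 + ga1 + ga2 + u4) * ed)
      ≤ 2 * ((ps1*B + ps2*B + ps3*(B*c2)) + B*ps1 + B*ps2 + B*(ps3*c2)) * (min sh 0 ^ 2 + min eh 0 ^ 2 + min ihv 0 ^ 2 + min rhv 0 ^ 2 + min sf 0 ^ 2 + min ef 0 ^ 2 + min ifv 0 ^ 2 + min sd 0 ^ 2 + min ed 0 ^ 2 + min idv 0 ^ 2 + min rdv 0 ^ 2 + min mv 0 ^ 2) := by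
    linarith only [hprod3, g31, g32, g33, g34, g35]
  -- component 10 : I_D
  have comp10 : 2 * (min idv 0) * (ga1 * ed - (mu3 + si3) * idv) ≤ 2 * ga1 * (min sh 0 ^ 2 + min eh 0 ^ 2 + min ihv 0 ^ 2 + min rhv 0 ^ 2 + min sf 0 ^ 2 + min ef 0 ^ 2 + min ifv 0 ^ 2 + min sd 0 ^ 2 + min ed 0 ^ 2 + min idv 0 ^ 2 + min rdv 0 ^ 2 + min mv 0 ^ 2) := by
    have g1 : ga1 * ((min idv 0)*ed) ≤ ga1 * (min sh 0 ^ 2 + min eh 0 ^ 2 + min ihv 0 ^ 2 + min rhv 0 ^ 2 + min sf 0 ^ 2 + min ef 0 ^ 2 + min ifv 0 ^ 2 + min sd 0 ^ 2 + min ed 0 ^ 2 + min idv 0 ^ 2 + min rdv 0 ^ 2 + min mv 0 ^ 2) := mul_le_mul_of_nonneg_left (mixQ (min idv 0) ed (min sh 0 ^ 2 + min eh 0 ^ 2 + min ihv 0 ^ 2 + min rhv 0 ^ 2 + min sf 0 ^ 2 + min ef 0 ^ 2 + min ifv 0 ^ 2 + min sd 0 ^ 2 + min ed 0 ^ 2 +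 min idv 0 ^ 2 + min rdv 0 ^ 2 + min mv 0 ^ 2) q10 e10 e9) hpga1
    have g2 : 0 ≤ (mu3+si3) * ((min idv 0)*idv) := by rw [s10]; positivity
    linarith only [g1, g2]
  -- component 11 : R_D
  have comp11 : 2 * (min rdv 0) * ((ga2 + u4) * ed - (mu3 + ga3) * rdv) ≤ 2 * (ga2 + 1) * (min sh 0 ^ 2 + min eh 0 ^ 2 + min ihv 0 ^ 2 + min rhv 0 ^ 2 + min sf 0 ^ 2 + min ef 0 ^ 2 + min ifv 0 ^ 2 + min sd 0 ^ 2 + min ed 0 ^ 2 + min idv 0 ^ 2 + min rdv 0 ^ 2 + min mv 0 ^ 2) := by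
    have g1 : (ga2+u4) * ((min rdv 0)*ed) ≤ (ga2+u4) * (min sh 0 ^ 2 + min eh 0 ^ 2 + min ihv 0 ^ 2 + min rhv 0 ^ 2 + min sf 0 ^ 2 + min ef 0 ^ 2 + min ifv 0 ^ 2 + min sd 0 ^ 2 + min ed 0 ^ 2 + min idv 0 ^ 2 + min rdv 0 ^ 2 + min mv 0 ^ 2) :=
      mul_le_mul_of_nonneg_left (mixQ (min rdv 0) ed (min sh 0 ^ 2 + min eh 0 ^ 2 + min ihv 0 ^ 2 + min rhv 0 ^ 2 + min sf 0 ^ 2 + min ef 0 ^ 2 + min ifv 0 ^ 2 + min sd 0 ^ 2 + min ed 0 ^ 2 + min idv 0 ^ 2 + min rdv 0 ^ 2 + min mv 0 ^ 2) q11 e11 e9) (by linarith only [hpga2, hu40])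
    have g2 : (ga2+u4) * (min sh 0 ^ 2 + min eh 0 ^ 2 + min ihv 0 ^ 2 + min rhv 0 ^ 2 + min sf 0 ^ 2 + min ef 0 ^ 2 + min ifv 0 ^ 2 + min sd 0 ^ 2 + min ed 0 ^ 2 + min idv 0 ^ 2 + min rdv 0 ^ 2 + min mv 0 ^ 2) ≤ (ga2+1) * (min sh 0 ^ 2 + min eh 0 ^ 2 + min ihv 0 ^ 2 + min rhv 0 ^ 2 + min sf 0 ^ 2 + min ef 0 ^ 2 + min ifv 0 ^ 2 + min sd 0 ^ 2 + min ed 0 ^ 2 + min idv 0 ^ 2 + min rdv 0 ^ 2 + min mv 0 ^ 2) := mul_le_mul_of_nonneg_right (by linarith only [hu41]) hQ0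
    have g3 : 0 ≤ (mu3+ga3) * ((min rdv 0)*rdv) := by rw [s11]; positivity
    linarith only [g1, g2, g3]
  -- component 12 : M
  have comp12 : 2 * (min mv 0) * (nu1 * ihv + nu2 * ifv + nu3 * idv - mu4 * mv)
      ≤ 2 * (nu1 + nu2 + nu3) * (min sh 0 ^ 2 + min eh 0 ^ 2 + min ihv 0 ^ 2 + min rhv 0 ^ 2 + min sf 0 ^ 2 + min ef 0 ^ 2 + min ifv 0 ^ 2 + min sd 0 ^ 2 + min ed 0 ^ 2 + min idv 0 ^ 2 + min rdv 0 ^ 2 + min mv 0 ^ 2) := by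
    have g1 : nu1 * ((min mv 0)*ihv) ≤ nu1 * (min sh 0 ^ 2 + min eh 0 ^ 2 + min ihv 0 ^ 2 + min rhv 0 ^ 2 + min sf 0 ^ 2 + min ef 0 ^ 2 + min ifv 0 ^ 2 + min sd 0 ^ 2 + min ed 0 ^ 2 + min idv 0 ^ 2 + min rdv 0 ^ 2 + min mv 0 ^ 2) := mul_le_mul_of_nonneg_left (mixQ (min mv 0) ihv (min sh 0 ^ 2 + min eh 0 ^ 2 + min ihv 0 ^ 2 + min rhv 0 ^ 2 + min sf 0 ^ 2 + min ef 0 ^ 2 + min ifv 0 ^ 2 + min sd 0 ^ 2 + min ed 0 ^ 2 + min idv 0 ^ 2 + min rdv 0 ^ 2 + min mv 0 ^ 2) q12 e12 e3) hpnu1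
    have g2 : nu2 * ((min mv 0)*ifv) ≤ nu2 * (min sh 0 ^ 2 + min eh 0 ^ 2 + min ihv 0 ^ 2 + min rhv 0 ^ 2 + min sf 0 ^ 2 + min ef 0 ^ 2 + min ifv 0 ^ 2 + min sd 0 ^ 2 + min ed 0 ^ 2 + min idv 0 ^ 2 + min rdv 0 ^ 2 + min mv 0 ^ 2) := mul_le_mul_of_nonneg_left (mixQ (min mv 0) ifv (min sh 0 ^ 2 + min eh 0 ^ 2 + min ihv 0 ^ 2 + min rhv 0 ^ 2 + min sf 0 ^ 2 + min ef 0 ^ 2 + min ifv 0 ^ 2 + min sd 0 ^ 2 + min ed 0 ^ 2 + min idv 0 ^ 2 + min rdv 0 ^ 2 + min mv 0 ^ 2) q12 e12 e7) hpnu2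
    have g3 : nu3 * ((min mv 0)*idv) ≤ nu3 * (min sh 0 ^ 2 + min eh 0 ^ 2 + min ihv 0 ^ 2 + min rhv 0 ^ 2 + min sf 0 ^ 2 + min ef 0 ^ 2 + min ifv 0 ^ 2 + min sd 0 ^ 2 + min ed 0 ^ 2 + min idv 0 ^ 2 + min rdv 0 ^ 2 + min mv 0 ^ 2) := mul_le_mul_of_nonneg_left (mixQ (min mv 0) idv (min sh 0 ^ 2 + min eh 0 ^ 2 + min ihv 0 ^ 2 + min rhv 0 ^ 2 + min sf 0 ^ 2 + min ef 0 ^ 2 + min ifv 0 ^ 2 + min sd 0 ^ 2 + min ed 0 ^ 2 + min idv 0 ^ 2 + min rdv 0 ^ 2 + min mv 0 ^ 2) q12 e12 e10) hpnu3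
    have g4 : 0 ≤ mu4 * ((min mv 0)*mv) := by rw [s12]; positivity
    linarith only [g1, g2, g3, g4]
  have hKQ : (2 * ((be3 + (tau1*B + tau2*B + tau3*(B*c2)))
        + ((tau1*B + tau2*B + tau3*(B*c2)) + B*tau1 + B*tau2 + B*(tau3*c2))
        + be1 + (be2 + 1)
        + (ka1*B + ka2*B + ka3*(B*c2))
        + ((ka1*B + ka2*B + ka3*(B*c2)) + B*ka1 + B*ka2 + B*(ka3*c2))
        + ga + ((ps1*B + ps2*B + ps3*(B*c2)) + ga3)
        + ((ps1*B + ps2*B + ps3*(B*c2)) + B*ps1 + B*ps2 + B*(ps3*c2))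
        + ga1 + (ga2 + 1) + (nu1 + nu2 + nu3))) * (min sh 0 ^ 2 + min eh 0 ^ 2 + min ihv 0 ^ 2 + min rhv 0 ^ 2 + min sf 0 ^ 2 + min ef 0 ^ 2 + min ifv 0 ^ 2 + min sd 0 ^ 2 + min ed 0 ^ 2 + min idv 0 ^ 2 + min rdv 0 ^ 2 + min mv 0 ^ 2) ≤ K * (min sh 0 ^ 2 + min eh 0 ^ 2 + min ihv 0 ^ 2 + min rhv 0 ^ 2 + min sf 0 ^ 2 + min ef 0 ^ 2 + min ifv 0 ^ 2 + min sd 0 ^ 2 + min ed 0 ^ 2 + min idv 0 ^ 2 + min rdv 0 ^ 2 + min mv 0 ^ 2) :=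
    mul_le_mul_of_nonneg_right hK hQ0
  linarith only [comp1, comp2, comp3, comp4, comp5, comp6, comp7, comp8, comp9, comp10, comp11, comp12, hKQ]



set_option maxHeartbeats 4000000 in
/-- Positivity of solutions of the rabies model (Lemma 1 / well-posedness):
if all parameters are nonnegative, `C > 0`, the constant controls lie in `[0,1]`
with `u1+u3 ≤ 1` and `u1+u2 ≤ 1`, and a differentiable solution of the system
has nonnegative components at `t = 0`, then all twelve components stay
nonnegative for all `t ≥ 0`. -/
theorem rabies_positivity
    (th1 th2 th3 mu1 mu2 mu3 mu4 tau1 tau2 tau3 ka1 ka2 ka3 ps1 ps2 ps3 rh1 rh2 rh3 be1 be2 be3 ga ga1 ga2 ga3 si1 si2 si3 nu1 nu2 nu3 C u1 u2 u3 u4 : ℝ)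
    (S_H E_H I_H R_H S_F E_F I_F S_D E_D I_D R_D M : ℝ → ℝ)
    (hpth1 : 0 ≤ th1)
    (hpth2 : 0 ≤ th2)
    (hpth3 : 0 ≤ th3)
    (hpmu1 : 0 ≤ mu1)
    (hpmu2 : 0 ≤ mu2)
    (hpmu3 : 0 ≤ mu3)
    (hpmu4 : 0 ≤ mu4)
    (hptau1 : 0 ≤ tau1)
    (hptau2 : 0 ≤ tau2)
    (hptau3 : 0 ≤ tau3)
    (hpka1 : 0 ≤ ka1)
    (hpka2 : 0 ≤ ka2)
    (hpka3 : 0 ≤ ka3)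
    (hpps1 : 0 ≤ ps1)
    (hpps2 : 0 ≤ ps2)
    (hpps3 : 0 ≤ ps3)
    (hprh1 : 0 ≤ rh1)
    (hprh2 : 0 ≤ rh2)
    (hprh3 : 0 ≤ rh3)
    (hpbe1 : 0 ≤ be1)
    (hpbe2 : 0 ≤ be2)
    (hpbe3 : 0 ≤ be3)
    (hpga : 0 ≤ ga)
    (hpga1 : 0 ≤ ga1)
    (hpga2 : 0 ≤ ga2)
    (hpga3 : 0 ≤ ga3)
    (hpsi1 : 0 ≤ si1)
    (hpsi2 : 0 ≤ si2)
    (hpsi3 : 0 ≤ si3)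
    (hpnu1 : 0 ≤ nu1)
    (hpnu2 : 0 ≤ nu2)
    (hpnu3 : 0 ≤ nu3)
    (hpC : 0 < C)
    (hu1 : u1 ∈ Set.Icc (0:ℝ) 1) (hu2 : u2 ∈ Set.Icc (0:ℝ) 1)
    (hu3 : u3 ∈ Set.Icc (0:ℝ) 1) (hu4 : u4 ∈ Set.Icc (0:ℝ) 1)
    (hu13 : u1 + u3 ≤ 1) (hu12 : u1 + u2 ≤ 1)
    (hodeS_H : ∀ t : ℝ, 0 ≤ t → HasDerivAt S_H (th1 + be3 * R_H t - mu1 * S_H t - (1 - (u1 + u3)) * (tau1 * I_F t + tau2 * I_D t + tau3 * (M t / (M t + C))) * S_H t) t)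
    (hodeE_H : ∀ t : ℝ, 0 ≤ t → HasDerivAt E_H ((1 - (u1 + u3)) * (tau1 * I_F t + tau2 * I_D t + tau3 * (M t / (M t + C))) * S_H t - (mu1 + be1 + be2 + u4) * E_H t) t)
    (hodeI_H : ∀ t : ℝ, 0 ≤ t → HasDerivAt I_H (be1 * E_H t - (si1 + mu1) * I_H t) t)
    (hodeR_H : ∀ t : ℝ, 0 ≤ t → HasDerivAt R_H ((be2 + u4) * E_H t - (be3 + mu1) * R_H t) t)
    (hodeS_F : ∀ t : ℝ, 0 ≤ t → HasDerivAt S_F (th2 - (ka1 * I_F t + ka2 * I_D t + ka3 * (M t / (M t + C))) * S_F t - mu2 * S_F t) t)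
    (hodeE_F : ∀ t : ℝ, 0 ≤ t → HasDerivAt E_F ((ka1 * I_F t + ka2 * I_D t + ka3 * (M t / (M t + C))) * S_F t - (mu2 + ga) * E_F t) t)
    (hodeI_F : ∀ t : ℝ, 0 ≤ t → HasDerivAt I_F (ga * E_F t - (mu2 + si2) * I_F t) t)
    (hodeS_D : ∀ t : ℝ, 0 ≤ t → HasDerivAt S_D (th3 - mu3 * S_D t - (1 - (u1 + u2)) * (ps1 * I_F t / (1 + rh1) + ps2 * I_D t / (1 + rh2) + ps3 * (M t / (M t + C)) / (1 + rh3)) * S_D t + ga3 * R_D t) t)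
    (hodeE_D : ∀ t : ℝ, 0 ≤ t → HasDerivAt E_D ((1 - (u1 + u2)) * (ps1 * I_F t / (1 + rh1) + ps2 * I_D t / (1 + rh2) + ps3 * (M t / (M t + C)) / (1 + rh3)) * S_D t - (mu3 + ga1 + ga2 + u4) * E_D t) t)
    (hodeI_D : ∀ t : ℝ, 0 ≤ t → HasDerivAt I_D (ga1 * E_D t - (mu3 + si3) * I_D t) t)
    (hodeR_D : ∀ t : ℝ, 0 ≤ t → HasDerivAt R_D ((ga2 + u4) * E_D t - (mu3 + ga3) * R_D t) t)
    (hodeM : ∀ t : ℝ, 0 ≤ t → HasDerivAt M (nu1 * I_H t + nu2 * I_F t + nu3 * I_D t - mu4 * M t) t)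
    (hinit : 0 ≤ S_H 0 ∧ 0 ≤ E_H 0 ∧ 0 ≤ I_H 0 ∧ 0 ≤ R_H 0 ∧ 0 ≤ S_F 0 ∧ 0 ≤ E_F 0 ∧ 0 ≤ I_F 0 ∧ 0 ≤ S_D 0 ∧ 0 ≤ E_D 0 ∧ 0 ≤ I_D 0 ∧ 0 ≤ R_D 0 ∧ 0 ≤ M 0) :
    ∀ t : ℝ, 0 ≤ t → (0 ≤ S_H t ∧ 0 ≤ E_H t ∧ 0 ≤ I_H t ∧ 0 ≤ R_H t ∧ 0 ≤ S_F t ∧ 0 ≤ E_F t ∧ 0 ≤ I_F t ∧ 0 ≤ S_D t ∧ 0 ≤ E_D t ∧ 0 ≤ I_D t ∧ 0 ≤ R_D t ∧ 0 ≤ M t) := by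
  obtain ⟨hi1, hi2, hi3, hi4, hi5, hi6, hi7, hi8, hi9, hi10, hi11, hi12⟩ := hinit
  intro T hT
  have cont1 : ContinuousOn S_H (Set.Icc 0 T) := fun s hs => ((hodeS_H s hs.1).continuousAt).continuousWithinAt
  have cont2 : ContinuousOn E_H (Set.Icc 0 T) := fun s hs => ((hodeE_H s hs.1).continuousAt).continuousWithinAt
  have cont3 : ContinuousOn I_H (Set.Icc 0 T) := fun s hs => ((hodeI_H s hs.1).continuousAt).continuousWithinAt
  have cont4 : ContinuousOn R_H (Set.Icc 0 T) := fun s hs => ((hodeR_H s hs.1).continuousAt).continuousWithinAt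
  have cont5 : ContinuousOn S_F (Set.Icc 0 T) := fun s hs => ((hodeS_F s hs.1).continuousAt).continuousWithinAt
  have cont6 : ContinuousOn E_F (Set.Icc 0 T) := fun s hs => ((hodeE_F s hs.1).continuousAt).continuousWithinAt
  have cont7 : ContinuousOn I_F (Set.Icc 0 T) := fun s hs => ((hodeI_F s hs.1).continuousAt).continuousWithinAt
  have cont8 : ContinuousOn S_D (Set.Icc 0 T) := fun s hs => ((hodeS_D s hs.1).continuousAt).continuousWithinAt
  have cont9 : ContinuousOn E_D (Set.Icc 0 T) := fun s hs => ((hodeE_D s hs.1).continuousAt).continuousWithinAt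
  have cont10 : ContinuousOn I_D (Set.Icc 0 T) := fun s hs => ((hodeI_D s hs.1).continuousAt).continuousWithinAt
  have cont11 : ContinuousOn R_D (Set.Icc 0 T) := fun s hs => ((hodeR_D s hs.1).continuousAt).continuousWithinAt
  have cont12 : ContinuousOn M (Set.Icc 0 T) := fun s hs => ((hodeM s hs.1).continuousAt).continuousWithinAt
  obtain ⟨B1, hBd1⟩ := isCompact_Icc.exists_bound_of_continuousOn cont1
  obtain ⟨B2, hBd2⟩ := isCompact_Icc.exists_bound_of_continuousOn cont2
  obtain ⟨B3, hBd3⟩ := isCompact_Icc.exists_bound_of_continuousOn cont3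
  obtain ⟨B4, hBd4⟩ := isCompact_Icc.exists_bound_of_continuousOn cont4
  obtain ⟨B5, hBd5⟩ := isCompact_Icc.exists_bound_of_continuousOn cont5
  obtain ⟨B6, hBd6⟩ := isCompact_Icc.exists_bound_of_continuousOn cont6
  obtain ⟨B7, hBd7⟩ := isCompact_Icc.exists_bound_of_continuousOn cont7
  obtain ⟨B8, hBd8⟩ := isCompact_Icc.exists_bound_of_continuousOn cont8
  obtain ⟨B9, hBd9⟩ := isCompact_Icc.exists_bound_of_continuousOn cont9
  obtain ⟨B10, hBd10⟩ := isCompact_Icc.exists_bound_of_continuousOn cont10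
  obtain ⟨B11, hBd11⟩ := isCompact_Icc.exists_bound_of_continuousOn cont11
  obtain ⟨B12, hBd12⟩ := isCompact_Icc.exists_bound_of_continuousOn cont12
  set B := max B1 (max B2 (max B3 (max B4 (max B5 (max B6 (max B7 (max B8 (max B9 (max B10 (max B11 (B12))))))))))) with hBdef
  have hle1 : B1 ≤ B := by rw [hBdef]; exact le_max_left _ _
  have hle2 : B2 ≤ B := by rw [hBdef]; exact le_trans (le_max_left _ _) (le_max_right _ _)
  have hle3 : B3 ≤ B := by rw [hBdef]; exact le_trans (le_trans (le_max_left _ _) (le_max_right _ _)) (le_max_right _ _)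
  have hle4 : B4 ≤ B := by rw [hBdef]; exact le_trans (le_trans (le_trans (le_max_left _ _) (le_max_right _ _)) (le_max_right _ _)) (le_max_right _ _)
  have hle5 : B5 ≤ B := by rw [hBdef]; exact le_trans (le_trans (le_trans (le_trans (le_max_left _ _) (le_max_right _ _)) (le_max_right _ _)) (le_max_right _ _)) (le_max_right _ _)
  have hle6 : B6 ≤ B := by rw [hBdef]; exact le_trans (le_trans (le_trans (le_trans (le_trans (le_max_left _ _) (le_max_right _ _)) (le_max_right _ _)) (le_max_right _ _)) (le_max_right _ _)) (le_max_right _ _)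
  have hle7 : B7 ≤ B := by rw [hBdef]; exact le_trans (le_trans (le_trans (le_trans (le_trans (le_trans (le_max_left _ _) (le_max_right _ _)) (le_max_right _ _)) (le_max_right _ _)) (le_max_right _ _)) (le_max_right _ _)) (le_max_right _ _)
  have hle8 : B8 ≤ B := by rw [hBdef]; exact le_trans (le_trans (le_trans (le_trans (le_trans (le_trans (le_trans (le_max_left _ _) (le_max_right _ _)) (le_max_right _ _)) (le_max_right _ _)) (le_max_right _ _)) (le_max_right _ _)) (le_max_right _ _)) (le_max_right _ _)
  have hle9 : B9 ≤ B := by rw [hBdef]; exact le_trans (le_trans (le_trans (le_trans (le_trans (le_trans (le_trans (le_trans (le_max_left _ _) (le_max_right _ _)) (le_max_right _ _)) (le_max_right _ _)) (le_max_right _ _)) (le_max_right _ _)) (le_max_right _ _)) (le_max_right _ _)) (le_max_right _ _)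
  have hle10 : B10 ≤ B := by rw [hBdef]; exact le_trans (le_trans (le_trans (le_trans (le_trans (le_trans (le_trans (le_trans (le_trans (le_max_left _ _) (le_max_right _ _)) (le_max_right _ _)) (le_max_right _ _)) (le_max_right _ _)) (le_max_right _ _)) (le_max_right _ _)) (le_max_right _ _)) (le_max_right _ _)) (le_max_right _ _)
  have hle11 : B11 ≤ B := by rw [hBdef]; exact le_trans (le_trans (le_trans (le_trans (le_trans (le_trans (le_trans (le_trans (le_trans (le_trans (le_max_left _ _) (le_max_right _ _)) (le_max_right _ _)) (le_max_right _ _)) (le_max_right _ _)) (le_max_right _ _)) (le_max_right _ _)) (le_max_right _ _)) (le_max_right _ _)) (le_max_right _ _)) (le_max_right _ _)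
  have hle12 : B12 ≤ B := by rw [hBdef]; exact le_trans (le_trans (le_trans (le_trans (le_trans (le_trans (le_trans (le_trans (le_trans (le_trans (le_max_right _ _) (le_max_right _ _)) (le_max_right _ _)) (le_max_right _ _)) (le_max_right _ _)) (le_max_right _ _)) (le_max_right _ _)) (le_max_right _ _)) (le_max_right _ _)) (le_max_right _ _)) (le_max_right _ _)
  have hb1 : ∀ s ∈ Set.Icc (0:ℝ) T, |S_H s| ≤ B := fun s hs => le_trans (by simpa using hBd1 s hs) hle1
  have hb2 : ∀ s ∈ Set.Icc (0:ℝ) T, |E_H s| ≤ B := fun s hs => le_trans (by simpa using hBd2 s hs) hle2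
  have hb3 : ∀ s ∈ Set.Icc (0:ℝ) T, |I_H s| ≤ B := fun s hs => le_trans (by simpa using hBd3 s hs) hle3
  have hb4 : ∀ s ∈ Set.Icc (0:ℝ) T, |R_H s| ≤ B := fun s hs => le_trans (by simpa using hBd4 s hs) hle4
  have hb5 : ∀ s ∈ Set.Icc (0:ℝ) T, |S_F s| ≤ B := fun s hs => le_trans (by simpa using hBd5 s hs) hle5
  have hb6 : ∀ s ∈ Set.Icc (0:ℝ) T, |E_F s| ≤ B := fun s hs => le_trans (by simpa using hBd6 s hs) hle6
  have hb7 : ∀ s ∈ Set.Icc (0:ℝ) T, |I_F s| ≤ B := fun s hs => le_trans (by simpa using hBd7 s hs) hle7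
  have hb8 : ∀ s ∈ Set.Icc (0:ℝ) T, |S_D s| ≤ B := fun s hs => le_trans (by simpa using hBd8 s hs) hle8
  have hb9 : ∀ s ∈ Set.Icc (0:ℝ) T, |E_D s| ≤ B := fun s hs => le_trans (by simpa using hBd9 s hs) hle9
  have hb10 : ∀ s ∈ Set.Icc (0:ℝ) T, |I_D s| ≤ B := fun s hs => le_trans (by simpa using hBd10 s hs) hle10
  have hb11 : ∀ s ∈ Set.Icc (0:ℝ) T, |R_D s| ≤ B := fun s hs => le_trans (by simpa using hBd11 s hs) hle11
  have hb12 : ∀ s ∈ Set.Icc (0:ℝ) T, |M s| ≤ B := fun s hs => le_trans (by simpa using hBd12 s hs) hle12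
  have hB0 : (0:ℝ) ≤ B := le_trans (abs_nonneg _) (hb1 0 ⟨le_refl 0, hT⟩)
  set A : Set ℝ := {s : ℝ | s ∈ Set.Icc (0:ℝ) T ∧ ∀ r ∈ Set.Icc (0:ℝ) s, (0 ≤ S_H r ∧ 0 ≤ E_H r ∧ 0 ≤ I_H r ∧ 0 ≤ R_H r ∧ 0 ≤ S_F r ∧ 0 ≤ E_F r ∧ 0 ≤ I_F r ∧ 0 ≤ S_D r ∧ 0 ≤ E_D r ∧ 0 ≤ I_D r ∧ 0 ≤ R_D r ∧ 0 ≤ M r)} with hAdef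
  have hA0 : (0:ℝ) ∈ A := by
    refine ⟨⟨le_refl 0, hT⟩, fun r hr => ?_⟩
    have h0 : r = 0 := le_antisymm hr.2 hr.1
    rw [h0]
    exact ⟨hi1, hi2, hi3, hi4, hi5, hi6, hi7, hi8, hi9, hi10, hi11, hi12⟩
  have hAb : BddAbove A := ⟨T, fun s hs => hs.1.2⟩
  have hane : A.Nonempty := ⟨0, hA0⟩
  set a := sSup A with hadef
  have ha0 : 0 ≤ a := le_csSup hAb hA0
  have haT : a ≤ T := csSup_le hane (fun s hs => hs.1.2)
  have hPlt : ∀ s, 0 ≤ s → s < a → (0 ≤ S_H s ∧ 0 ≤ E_H s ∧ 0 ≤ I_H s ∧ 0 ≤ R_H s ∧ 0 ≤ S_F s ∧ 0 ≤ E_F s ∧ 0 ≤ I_F s ∧ 0 ≤ S_D s ∧ 0 ≤ E_D s ∧ 0 ≤ I_D s ∧ 0 ≤ R_D s ∧ 0 ≤ M s) := by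
    intro s hs0 hsa
    obtain ⟨r, hrA, hsr⟩ := exists_lt_of_lt_csSup hane hsa
    exact hrA.2 s ⟨hs0, hsr.le⟩
  have hPa : (0 ≤ S_H a ∧ 0 ≤ E_H a ∧ 0 ≤ I_H a ∧ 0 ≤ R_H a ∧ 0 ≤ S_F a ∧ 0 ≤ E_F a ∧ 0 ≤ I_F a ∧ 0 ≤ S_D a ∧ 0 ≤ E_D a ∧ 0 ≤ I_D a ∧ 0 ≤ R_D a ∧ 0 ≤ M a) := by
    rcases eq_or_lt_of_le ha0 with h | h
    · rw [← h]; exact ⟨hi1, hi2, hi3, hi4, hi5, hi6, hi7, hi8, hi9, hi10, hi11, hi12⟩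
    · exact ⟨nonneg_at_lim _ _ h ((hodeS_H a ha0).continuousAt) (fun s h1 h2 => (hPlt s h1 h2).1),
        nonneg_at_lim _ _ h ((hodeE_H a ha0).continuousAt) (fun s h1 h2 => (hPlt s h1 h2).2.1),
        nonneg_at_lim _ _ h ((hodeI_H a ha0).continuousAt) (fun s h1 h2 => (hPlt s h1 h2).2.2.1),
        nonneg_at_lim _ _ h ((hodeR_H a ha0).continuousAt) (fun s h1 h2 => (hPlt s h1 h2).2.2.2.1),
        nonneg_at_lim _ _ h ((hodeS_F a ha0).continuousAt) (fun s h1 h2 => (hPlt s h1 h2).2.2.2.2.1),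
        nonneg_at_lim _ _ h ((hodeE_F a ha0).continuousAt) (fun s h1 h2 => (hPlt s h1 h2).2.2.2.2.2.1),
        nonneg_at_lim _ _ h ((hodeI_F a ha0).continuousAt) (fun s h1 h2 => (hPlt s h1 h2).2.2.2.2.2.2.1),
        nonneg_at_lim _ _ h ((hodeS_D a ha0).continuousAt) (fun s h1 h2 => (hPlt s h1 h2).2.2.2.2.2.2.2.1),
        nonneg_at_lim _ _ h ((hodeE_D a ha0).continuousAt) (fun s h1 h2 => (hPlt s h1 h2).2.2.2.2.2.2.2.2.1),
        nonneg_at_lim _ _ h ((hodeI_D a ha0).continuousAt) (fun s h1 h2 => (hPlt s h1 h2).2.2.2.2.2.2.2.2.2.1),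
        nonneg_at_lim _ _ h ((hodeR_D a ha0).continuousAt) (fun s h1 h2 => (hPlt s h1 h2).2.2.2.2.2.2.2.2.2.2.1),
        nonneg_at_lim _ _ h ((hodeM a ha0).continuousAt) (fun s h1 h2 => (hPlt s h1 h2).2.2.2.2.2.2.2.2.2.2.2)⟩
  have hPle : ∀ s ∈ Set.Icc (0:ℝ) a, (0 ≤ S_H s ∧ 0 ≤ E_H s ∧ 0 ≤ I_H s ∧ 0 ≤ R_H s ∧ 0 ≤ S_F s ∧ 0 ≤ E_F s ∧ 0 ≤ I_F s ∧ 0 ≤ S_D s ∧ 0 ≤ E_D s ∧ 0 ≤ I_D s ∧ 0 ≤ R_D s ∧ 0 ≤ M s) := by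
    intro s hs
    rcases eq_or_lt_of_le hs.2 with h | h
    · rw [h]; exact hPa
    · exact hPlt s hs.1 h
  rcases eq_or_lt_of_le haT with heq | hlt
  · rw [← heq]; exact hPa
  · exfalso
    obtain ⟨δ, hδ0, hδ⟩ := Metric.continuousAt_iff.1 ((hodeM a ha0).continuousAt) (C/2) (by linarith)
    set b := min (a + δ/2) T with hbdef
    have hab : a < b := lt_min (by linarith) hlt
    have hbT : b ≤ T := min_le_right _ _
    have hb0 : (0:ℝ) ≤ b := le_trans ha0 hab.le
    have hMa : 0 ≤ M a := hPa.2.2.2.2.2.2.2.2.2.2.2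
    have hMbound : ∀ s ∈ Set.Icc a b, C/2 ≤ M s + C := by
      intro s hs
      have hsb : s ≤ a + δ/2 := le_trans hs.2 (min_le_left _ _)
      have h1 : dist s a < δ := by
        rw [Real.dist_eq, abs_of_nonneg (by linarith [hs.1] : (0:ℝ) ≤ s - a)]
        linarith
      have h2 := hδ h1
      rw [Real.dist_eq] at h2
      have h3 := abs_lt.1 h2
      linarith [h3.1]
    set c2 : ℝ := (C/2)⁻¹ with hc2def
    have hc20 : 0 ≤ c2 := by rw [hc2def]; positivity
    obtain ⟨K, hK⟩ : ∃ K : ℝ, 2 * ((be3 + (tau1*B + tau2*B + tau3*(B*c2)))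
        + ((tau1*B + tau2*B + tau3*(B*c2)) + B*tau1 + B*tau2 + B*(tau3*c2))
        + be1 + (be2 + 1)
        + (ka1*B + ka2*B + ka3*(B*c2))
        + ((ka1*B + ka2*B + ka3*(B*c2)) + B*ka1 + B*ka2 + B*(ka3*c2))
        + ga + ((ps1*B + ps2*B + ps3*(B*c2)) + ga3)
        + ((ps1*B + ps2*B + ps3*(B*c2)) + B*ps1 + B*ps2 + B*(ps3*c2))
        + ga1 + (ga2 + 1) + (nu1 + nu2 + nu3)) ≤ K := ⟨_, le_refl _⟩
    have he3a : 0 ≤ 1 - (u1 + u3) := by linarith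
    have he3b : 1 - (u1 + u3) ≤ 1 := by linarith [hu1.1, hu3.1]
    have he2a : 0 ≤ 1 - (u1 + u2) := by linarith
    have he2b : 1 - (u1 + u2) ≤ 1 := by linarith [hu1.1, hu2.1]
    have key : ∀ s ∈ Set.Icc a b, ∃ d, HasDerivAt (fun u => (min (S_H u) 0 ^ 2 + min (E_H u) 0 ^ 2 + min (I_H u) 0 ^ 2 + min (R_H u) 0 ^ 2 + min (S_F u) 0 ^ 2 + min (E_F u) 0 ^ 2 + min (I_F u) 0 ^ 2 + min (S_D u) 0 ^ 2 + min (E_D u) 0 ^ 2 + min (I_D u) 0 ^ 2 + min (R_D u) 0 ^ 2 + min (M u) 0 ^ 2) * Real.exp (-(K*u))) d s ∧ d ≤ 0 := by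
      intro s hs
      have hs0 : 0 ≤ s := le_trans ha0 hs.1
      have hsT : s ∈ Set.Icc (0:ℝ) T := ⟨hs0, le_trans hs.2 hbT⟩
      have hlam := lam_bounds (M s) B C c2 hpC hc2def (hb12 s hsT) (hMbound s hs)
      have hG : HasDerivAt (fun u => min (S_H u) 0 ^ 2 + min (E_H u) 0 ^ 2 + min (I_H u) 0 ^ 2 + min (R_H u) 0 ^ 2 + min (S_F u) 0 ^ 2 + min (E_F u) 0 ^ 2 + min (I_F u) 0 ^ 2 + min (S_D u) 0 ^ 2 + min (E_D u) 0 ^ 2 + min (I_D u) 0 ^ 2 + min (R_D u) 0 ^ 2 + min (M u) 0 ^ 2) _ s := (((((((((((((min_sq_deriv (S_H s)).comp s (hodeS_H s hs0)).add ((min_sq_deriv (E_H s)).comp s (hodeE_H s hs0))).add ((min_sq_deriv (I_H s)).comp s (hodeI_H s hs0))).add ((min_sq_deriv (R_H s)).comp s (hodeR_H s hs0))).add ((min_sq_deriv (S_F s)).comp s (hodeS_F s hs0))).add ((min_sq_deriv (E_F s)).comp s (hodeE_F s hs0))).add ((min_sq_deriv (I_F s)).comp s (hodeI_F s hs0))).add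 ((min_sq_deriv (S_D s)).comp s (hodeS_D s hs0))).add ((min_sq_deriv (E_D s)).comp s (hodeE_D s hs0))).add ((min_sq_deriv (I_D s)).comp s (hodeI_D s hs0))).add ((min_sq_deriv (R_D s)).comp s (hodeR_D s hs0))).add ((min_sq_deriv (M s)).comp s (hodeM s hs0)))
      have hexp : HasDerivAt (fun u : ℝ => Real.exp (-(K*u))) (Real.exp (-(K*s)) * -K) s := by
        have h1 : HasDerivAt (fun u : ℝ => -(K*u)) (-K) s := by
          simpa using ((hasDerivAt_id s).const_mul (-K))
        simpa using h1.exp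
      refine ⟨_, hG.mul hexp, ?_⟩
      have hcore := rabies_core th1 th2 th3 mu1 mu2 mu3 mu4 tau1 tau2 tau3 ka1 ka2 ka3 ps1 ps2 ps3 rh1 rh2 rh3 be1 be2 be3 ga ga1 ga2 ga3 si1 si2 si3 nu1 nu2 nu3 u1 u2 u3 u4 B c2 K (S_H s) (E_H s) (I_H s) (R_H s) (S_F s) (E_F s) (I_F s) (S_D s) (E_D s) (I_D s) (R_D s) (M s) (M s / (M s + C)) hpth1 hpth2 hpth3 hpmu1 hpmu2 hpmu3 hpmu4 hptau1 hptau2 hptau3 hpka1 hpka2 hpka3 hpps1 hpps2 hpps3 hprh1 hprh2 hprh3 hpbe1 hpbe2 hpbe3 hpga hpga1 hpga2 hpga3 hpsi1 hpsi2 hpsi3 hpnu1 hpnu2 hpnu3 hu4.1 hu4.2 he3a he3b he2a he2b hB0 hc20 (hb1 s hsT) (hb2 s hsT) (hb3 s hsT) (hb4 s hsT) (hb5 s hsT) (hb6 s hsT) (hb7 s hsT) (hb8 s hsT) (hb9 s hsT) (hb10 s hsT) (hb11 s hsT) (hb12 s hsT) hlam.1 hlam.2.1 hlam.2.2 hK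
      linarith only [mul_nonneg (Real.exp_pos (-(K*s))).le (sub_nonneg.2 hcore)]
    have hanti : AntitoneOn (fun u => (min (S_H u) 0 ^ 2 + min (E_H u) 0 ^ 2 + min (I_H u) 0 ^ 2 + min (R_H u) 0 ^ 2 + min (S_F u) 0 ^ 2 + min (E_F u) 0 ^ 2 + min (I_F u) 0 ^ 2 + min (S_D u) 0 ^ 2 + min (E_D u) 0 ^ 2 + min (I_D u) 0 ^ 2 + min (R_D u) 0 ^ 2 + min (M u) 0 ^ 2) * Real.exp (-(K*u))) (Set.Icc a b) := by
      apply antitoneOn_of_deriv_nonpos (convex_Icc a b)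
      · intro s hs
        obtain ⟨d, hd, _⟩ := key s hs
        exact hd.continuousAt.continuousWithinAt
      · intro s hs
        rw [interior_Icc] at hs
        obtain ⟨d, hd, _⟩ := key s (Set.Ioo_subset_Icc_self hs)
        exact hd.differentiableAt.differentiableWithinAt
      · intro s hs
        rw [interior_Icc] at hs
        obtain ⟨d, hd, hd0⟩ := key s (Set.Ioo_subset_Icc_self hs)
        rw [hd.deriv]
        exact hd0
    have hFa0 : (min (S_H a) 0 ^ 2 + min (E_H a) 0 ^ 2 + min (I_H a) 0 ^ 2 + min (R_H a) 0 ^ 2 + min (S_F a) 0 ^ 2 + min (E_F a) 0 ^ 2 + min (I_F a) 0 ^ 2 + min (S_D a) 0 ^ 2 + min (E_D a) 0 ^ 2 + min (I_D a) 0 ^ 2 + min (R_D a) 0 ^ 2 + min (M a) 0 ^ 2) * Real.exp (-(K*a)) = 0 := by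
      have ee1 : min (S_H a) 0 = 0 := min_eq_right hPa.1
      have ee2 : min (E_H a) 0 = 0 := min_eq_right hPa.2.1
      have ee3 : min (I_H a) 0 = 0 := min_eq_right hPa.2.2.1
      have ee4 : min (R_H a) 0 = 0 := min_eq_right hPa.2.2.2.1
      have ee5 : min (S_F a) 0 = 0 := min_eq_right hPa.2.2.2.2.1
      have ee6 : min (E_F a) 0 = 0 := min_eq_right hPa.2.2.2.2.2.1
      have ee7 : min (I_F a) 0 = 0 := min_eq_right hPa.2.2.2.2.2.2.1
      have ee8 : min (S_D a) 0 = 0 := min_eq_right hPa.2.2.2.2.2.2.2.1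
      have ee9 : min (E_D a) 0 = 0 := min_eq_right hPa.2.2.2.2.2.2.2.2.1
      have ee10 : min (I_D a) 0 = 0 := min_eq_right hPa.2.2.2.2.2.2.2.2.2.1
      have ee11 : min (R_D a) 0 = 0 := min_eq_right hPa.2.2.2.2.2.2.2.2.2.2.1
      have ee12 : min (M a) 0 = 0 := min_eq_right hPa.2.2.2.2.2.2.2.2.2.2.2
      rw [ee1, ee2, ee3, ee4, ee5, ee6, ee7, ee8, ee9, ee10, ee11, ee12]
      norm_num
    have hnn : ∀ s ∈ Set.Icc a b, (0 ≤ S_H s ∧ 0 ≤ E_H s ∧ 0 ≤ I_H s ∧ 0 ≤ R_H s ∧ 0 ≤ S_F s ∧ 0 ≤ E_F s ∧ 0 ≤ I_F s ∧ 0 ≤ S_D s ∧ 0 ≤ E_D s ∧ 0 ≤ I_D s ∧ 0 ≤ R_D s ∧ 0 ≤ M s) := by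
      intro s hs
      have h1 : (min (S_H s) 0 ^ 2 + min (E_H s) 0 ^ 2 + min (I_H s) 0 ^ 2 + min (R_H s) 0 ^ 2 + min (S_F s) 0 ^ 2 + min (E_F s) 0 ^ 2 + min (I_F s) 0 ^ 2 + min (S_D s) 0 ^ 2 + min (E_D s) 0 ^ 2 + min (I_D s) 0 ^ 2 + min (R_D s) 0 ^ 2 + min (M s) 0 ^ 2) * Real.exp (-(K*s)) ≤ (min (S_H a) 0 ^ 2 + min (E_H a) 0 ^ 2 + min (I_H a) 0 ^ 2 + min (R_H a) 0 ^ 2 + min (S_F a) 0 ^ 2 + min (E_F a) 0 ^ 2 + min (I_F a) 0 ^ 2 + min (S_D a) 0 ^ 2 + min (E_D a) 0 ^ 2 + min (I_D a) 0 ^ 2 + min (R_D a) 0 ^ 2 + min (M a) 0 ^ 2) * Real.exp (-(K*a)) := hanti (Set.left_mem_Icc.2 hab.le) hs hs.1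
      rw [hFa0] at h1
      have hGs : (min (S_H s) 0 ^ 2 + min (E_H s) 0 ^ 2 + min (I_H s) 0 ^ 2 + min (R_H s) 0 ^ 2 + min (S_F s) 0 ^ 2 + min (E_F s) 0 ^ 2 + min (I_F s) 0 ^ 2 + min (S_D s) 0 ^ 2 + min (E_D s) 0 ^ 2 + min (I_D s) 0 ^ 2 + min (R_D s) 0 ^ 2 + min (M s) 0 ^ 2) ≤ 0 := by
        have h1' := h1.trans_eq (zero_mul (Real.exp (-(K*s)))).symm
        exact le_of_mul_le_mul_right h1' (Real.exp_pos (-(K*s)))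
      exact ⟨nonneg_of_sq_le _ (by linarith only [hGs, sq_nonneg (min (E_H s) 0), sq_nonneg (min (I_H s) 0), sq_nonneg (min (R_H s) 0), sq_nonneg (min (S_F s) 0), sq_nonneg (min (E_F s) 0), sq_nonneg (min (I_F s) 0), sq_nonneg (min (S_D s) 0), sq_nonneg (min (E_D s) 0), sq_nonneg (min (I_D s) 0), sq_nonneg (min (R_D s) 0), sq_nonneg (min (M s) 0)]),
        nonneg_of_sq_le _ (by linarith only [hGs, sq_nonneg (min (S_H s) 0), sq_nonneg (min (I_H s) 0), sq_nonneg (min (R_H s) 0), sq_nonneg (min (S_F s) 0), sq_nonneg (min (E_F s) 0), sq_nonneg (min (I_F s) 0), sq_nonneg (min (S_D s) 0), sq_nonneg (min (E_D s) 0), sq_nonneg (min (I_D s) 0), sq_nonneg (min (R_D s) 0), sq_nonneg (min (M s) 0)]),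
        nonneg_of_sq_le _ (by linarith only [hGs, sq_nonneg (min (S_H s) 0), sq_nonneg (min (E_H s) 0), sq_nonneg (min (R_H s) 0), sq_nonneg (min (S_F s) 0), sq_nonneg (min (E_F s) 0), sq_nonneg (min (I_F s) 0), sq_nonneg (min (S_D s) 0), sq_nonneg (min (E_D s) 0), sq_nonneg (min (I_D s) 0), sq_nonneg (min (R_D s) 0), sq_nonneg (min (M s) 0)]),
        nonneg_of_sq_le _ (by linarith only [hGs, sq_nonneg (min (S_H s) 0), sq_nonneg (min (E_H s) 0), sq_nonneg (min (I_H s) 0), sq_nonneg (min (S_F s) 0), sq_nonneg (min (E_F s) 0), sq_nonneg (min (I_F s) 0), sq_nonneg (min (S_D s) 0), sq_nonneg (min (E_D s) 0), sq_nonneg (min (I_D s) 0), sq_nonneg (min (R_D s) 0), sq_nonneg (min (M s) 0)]),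
        nonneg_of_sq_le _ (by linarith only [hGs, sq_nonneg (min (S_H s) 0), sq_nonneg (min (E_H s) 0), sq_nonneg (min (I_H s) 0), sq_nonneg (min (R_H s) 0), sq_nonneg (min (E_F s) 0), sq_nonneg (min (I_F s) 0), sq_nonneg (min (S_D s) 0), sq_nonneg (min (E_D s) 0), sq_nonneg (min (I_D s) 0), sq_nonneg (min (R_D s) 0), sq_nonneg (min (M s) 0)]),
        nonneg_of_sq_le _ (by linarith only [hGs, sq_nonneg (min (S_H s) 0), sq_nonneg (min (E_H s) 0), sq_nonneg (min (I_H s) 0), sq_nonneg (min (R_H s) 0), sq_nonneg (min (S_F s) 0), sq_nonneg (min (I_F s) 0), sq_nonneg (min (S_D s) 0), sq_nonneg (min (E_D s) 0), sq_nonneg (min (I_D s) 0), sq_nonneg (min (R_D s) 0), sq_nonneg (min (M s) 0)]),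
        nonneg_of_sq_le _ (by linarith only [hGs, sq_nonneg (min (S_H s) 0), sq_nonneg (min (E_H s) 0), sq_nonneg (min (I_H s) 0), sq_nonneg (min (R_H s) 0), sq_nonneg (min (S_F s) 0), sq_nonneg (min (E_F s) 0), sq_nonneg (min (S_D s) 0), sq_nonneg (min (E_D s) 0), sq_nonneg (min (I_D s) 0), sq_nonneg (min (R_D s) 0), sq_nonneg (min (M s) 0)]),
        nonneg_of_sq_le _ (by linarith only [hGs, sq_nonneg (min (S_H s) 0), sq_nonneg (min (E_H s) 0), sq_nonneg (min (I_H s) 0), sq_nonneg (min (R_H s) 0), sq_nonneg (min (S_F s) 0), sq_nonneg (min (E_F s) 0), sq_nonneg (min (I_F s) 0), sq_nonneg (min (E_D s) 0), sq_nonneg (min (I_D s) 0), sq_nonneg (min (R_D s) 0), sq_nonneg (min (M s) 0)]),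
        nonneg_of_sq_le _ (by linarith only [hGs, sq_nonneg (min (S_H s) 0), sq_nonneg (min (E_H s) 0), sq_nonneg (min (I_H s) 0), sq_nonneg (min (R_H s) 0), sq_nonneg (min (S_F s) 0), sq_nonneg (min (E_F s) 0), sq_nonneg (min (I_F s) 0), sq_nonneg (min (S_D s) 0), sq_nonneg (min (I_D s) 0), sq_nonneg (min (R_D s) 0), sq_nonneg (min (M s) 0)]),
        nonneg_of_sq_le _ (by linarith only [hGs, sq_nonneg (min (S_H s) 0), sq_nonneg (min (E_H s) 0), sq_nonneg (min (I_H s) 0), sq_nonneg (min (R_H s) 0), sq_nonneg (min (S_F s) 0), sq_nonneg (min (E_F s) 0), sq_nonneg (min (I_F s) 0), sq_nonneg (min (S_D s) 0), sq_nonneg (min (E_D s) 0), sq_nonneg (min (R_D s) 0), sq_nonneg (min (M s) 0)]),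
        nonneg_of_sq_le _ (by linarith only [hGs, sq_nonneg (min (S_H s) 0), sq_nonneg (min (E_H s) 0), sq_nonneg (min (I_H s) 0), sq_nonneg (min (R_H s) 0), sq_nonneg (min (S_F s) 0), sq_nonneg (min (E_F s) 0), sq_nonneg (min (I_F s) 0), sq_nonneg (min (S_D s) 0), sq_nonneg (min (E_D s) 0), sq_nonneg (min (I_D s) 0), sq_nonneg (min (M s) 0)]),
        nonneg_of_sq_le _ (by linarith only [hGs, sq_nonneg (min (S_H s) 0), sq_nonneg (min (E_H s) 0), sq_nonneg (min (I_H s) 0), sq_nonneg (min (R_H s) 0), sq_nonneg (min (S_F s) 0), sq_nonneg (min (E_F s) 0), sq_nonneg (min (I_F s) 0), sq_nonneg (min (S_D s) 0), sq_nonneg (min (E_D s) 0), sq_nonneg (min (I_D s) 0), sq_nonneg (min (R_D s) 0)])⟩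
    have hbA : b ∈ A := by
      refine ⟨⟨hb0, hbT⟩, fun r hr => ?_⟩
      rcases le_or_gt r a with h | h
      · exact hPle r ⟨hr.1, h⟩
      · exact hnn r ⟨h.le, hr.2⟩
    have hba : b ≤ a := le_csSup hAb hbA
    linarith
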